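/- Under the lex monomial order with y_1 > y_2 > ... > y_m > z > x_1 > ... > x_n on T = k[x_1,...,x_n,y_1,...,y_m,z], the elements y_1^2 - z f_1^2,..., y_m^2 - z f_m^2, g_m^even, g_m^odd form a Gröbner basis of the ideal they generate, and the initial ideal is (y_1^2,...,y_m^2, y_1⋯y_m, y_1⋯y_{m-1}·in(f_m)). -/

import Mathlib

open MvPolynomial

/-- `g even = Σ_{S ⊆ {1,…,m}, |S| even} y^{S̄} f^S z^{|S|/2}`. -/
def gEvenFull {T : Type*} [CommRing T] {m : ℕ} (Y F : Fin m → T) (Z : T) : T :=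
  ∑ S ∈ Finset.univ.powerset.filter (fun S : Finset (Fin m) => Even S.card),
    (∏ i ∈ Sᶜ, Y i) * (∏ i ∈ S, F i) * Z ^ (S.card / 2)

/-- `g odd = Σ_{S ⊆ {1,…,m}, |S| odd} y^{S̄} f^S z^{(|S|-1)/2}`. -/
def gOddFull {T : Type*} [CommRing T] {m : ℕ} (Y F : Fin m → T) (Z : T) : T :=
  ∑ S ∈ Finset.univ.powerset.filter (fun S : Finset (Fin m) => Odd S.card),
    (∏ i ∈ Sᶜ, Y i) * (∏ i ∈ S, F i) * Z ^ ((S.card - 1) / 2)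

/-- The lex-leading monomial (exponent vector) of a multivariate polynomial, for the
lexicographic order in which `X 0 > X 1 > ⋯`.  (By convention it is `0` for `p = 0`.) -/
noncomputable def leadMon {N : ℕ} {k : Type*} [CommSemiring k]
    (p : MvPolynomial (Fin N) k) : Fin N →₀ ℕ :=
  (MonomialOrder.lex (σ := Fin N)).toSyn.symm
    (p.support.sup (fun d => (MonomialOrder.lex (σ := Fin N)).toSyn d))

namespace GBaux

open Classical in
example : True := trivial
open Finsupp
variable {N : ℕ} {k : Type*} [CommSemiring k]
open scoped Classical

lemma leadMon_def (p : MvPolynomial (Fin N) k) :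
    toLex (leadMon p) = p.support.sup (fun d => toLex d) := by
  show toLex (ofLex _) = _
  rfl

lemma le_leadMon {p : MvPolynomial (Fin N) k} {d : Fin N →₀ ℕ} (h : d ∈ p.support) :
    toLex d ≤ toLex (leadMon p) := by
  rw [leadMon_def]; exact Finset.le_sup (f := fun d => toLex d) h

lemma leadMon_mem {p : MvPolynomial (Fin N) k} (h : p ≠ 0) : leadMon p ∈ p.support := by
  have hne : p.support.Nonempty := MvPolynomial.support_nonempty.2 h
  obtain ⟨d, hd, hsup⟩ := Finset.exists_mem_eq_sup p.support hne (fun d => toLex d)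
  have : toLex (leadMon p) = toLex d := by rw [leadMon_def, hsup]
  rwa [toLex.injective this]

lemma coeff_leadMon_ne_zero {p : MvPolynomial (Fin N) k} (h : p ≠ 0) :
    MvPolynomial.coeff (leadMon p) p ≠ 0 :=
  MvPolynomial.mem_support_iff.1 (leadMon_mem h)

lemma leadMon_eq_of {p : MvPolynomial (Fin N) k} {t : Fin N →₀ ℕ}
    (h1 : MvPolynomial.coeff t p ≠ 0) (h2 : ∀ d ∈ p.support, toLex d ≤ toLex t) :
    leadMon p = t := by
  have hne : p ≠ 0 := fun h => h1 (by simp [h])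
  have hmem := leadMon_mem hne
  have h3 : toLex (leadMon p) ≤ toLex t := h2 _ hmem
  have h4 : toLex t ≤ toLex (leadMon p) := le_leadMon (MvPolynomial.mem_support_iff.2 h1)
  exact toLex.injective (le_antisymm h3 h4)

lemma leadMon_monomial {d : Fin N →₀ ℕ} {c : k} (hc : c ≠ 0) :
    leadMon (MvPolynomial.monomial d c) = d := by
  apply leadMon_eq_of (by simpa using hc)
  intro e he
  rw [MvPolynomial.support_monomial, if_neg hc] at he
  simp at he; subst he; rfl

lemma lex_add_right_cancel {a a' b b' : Lex (Fin N →₀ ℕ)}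
    (h1 : a ≤ a') (h2 : b ≤ b') (h : a + b = a' + b') : a = a' ∧ b = b' := by
  rcases lt_or_eq_of_le h1 with h1' | rfl
  · exfalso
    have := add_lt_add_of_lt_of_le h1' h2
    rw [h] at this; exact lt_irrefl _ this
  · exact ⟨rfl, by exact add_left_cancel h⟩

lemma toLex_add' (a b : Fin N →₀ ℕ) : toLex (a + b) = toLex a + toLex b := rfl

lemma coeff_mul_leadMon (p q : MvPolynomial (Fin N) k) :
    MvPolynomial.coeff (leadMon p + leadMon q) (p * q)
      = MvPolynomial.coeff (leadMon p) p * MvPolynomial.coeff (leadMon q) q := by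
  rw [MvPolynomial.coeff_mul]
  rw [Finset.sum_eq_single (leadMon p, leadMon q)]
  · intro x hx hne
    rcases eq_or_ne (MvPolynomial.coeff x.1 p) 0 with h1 | h1
    · rw [h1, zero_mul]
    rcases eq_or_ne (MvPolynomial.coeff x.2 q) 0 with h2 | h2
    · rw [h2, mul_zero]
    exfalso
    have hx1 : toLex x.1 ≤ toLex (leadMon p) :=
      le_leadMon (MvPolynomial.mem_support_iff.2 h1)
    have hx2 : toLex x.2 ≤ toLex (leadMon q) :=
      le_leadMon (MvPolynomial.mem_support_iff.2 h2)
    have hadd : x.1 + x.2 = leadMon p + leadMon q := Finset.HasAntidiagonal.mem_antidiagonal.1 hx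
    have := lex_add_right_cancel hx1 hx2 (by rw [← toLex_add', ← toLex_add', hadd])
    exact hne (Prod.ext (toLex.injective this.1) (toLex.injective this.2))
  · intro h
    exfalso; exact h (Finset.HasAntidiagonal.mem_antidiagonal.2 rfl)

lemma le_leadMon_mul {p q : MvPolynomial (Fin N) k} {d : Fin N →₀ ℕ}
    (h : d ∈ (p * q).support) : toLex d ≤ toLex (leadMon p + leadMon q) := by
  classical
  have := MvPolynomial.support_mul p q h
  rw [Finset.mem_add] at this
  obtain ⟨d1, h1, d2, h2, rfl⟩ := this
  rw [toLex_add', toLex_add']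
  exact add_le_add (le_leadMon h1) (le_leadMon h2)

lemma leadMon_mul {p q : MvPolynomial (Fin N) k}
    (h : MvPolynomial.coeff (leadMon p) p * MvPolynomial.coeff (leadMon q) q ≠ 0) :
    leadMon (p * q) = leadMon p + leadMon q := by
  apply leadMon_eq_of (by rw [coeff_mul_leadMon]; exact h)
  intro d hd; exact le_leadMon_mul hd

lemma leadMon_lt_of_supp {p : MvPolynomial (Fin N) k} {t : Fin N →₀ ℕ} (hp : p ≠ 0)
    (h : ∀ d ∈ p.support, toLex d < toLex t) : toLex (leadMon p) < toLex t :=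
  h _ (leadMon_mem hp)


open Finsupp
open scoped Classical

variable {k : Type*} [Field k] {n m : ℕ}

theorem yI_lt (i : Fin (m+1)) : i.1 < (m+1)+1+n := by omega
def yI (i : Fin (m+1)) : Fin ((m+1)+1+n) := ⟨i.1, yI_lt i⟩
theorem zI_lt : m+1 < (m+1)+1+n := by omega
def zI : Fin ((m+1)+1+n) := ⟨m+1, zI_lt⟩
theorem xI_lt (j : Fin n) : (m+1)+1+j.1 < (m+1)+1+n := by omega
def xI (j : Fin n) : Fin ((m+1)+1+n) := ⟨(m+1)+1+j.1, xI_lt j⟩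

lemma yI_inj : Function.Injective (yI (n := n) (m := m)) := by
  intro a b h
  simpa [yI, Fin.ext_iff] using h

/-- characteristic exponent of a set of y-variables -/
noncomputable def chi (A : Finset (Fin (m+1))) : Fin ((m+1)+1+n) →₀ ℕ :=
  ∑ i ∈ A, Finsupp.single (yI i) 1

lemma chi_apply_y (A : Finset (Fin (m+1))) (j : Fin (m+1)) :
    chi (n := n) A (yI j) = if j ∈ A then 1 else 0 := by
  rw [chi, Finsupp.finset_sum_apply]
  simp only [Finsupp.single_apply, yI_inj.eq_iff]
  exact Finset.sum_ite_eq' A j (fun _ => 1)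

lemma chi_apply_hi (A : Finset (Fin (m+1))) (v : Fin ((m+1)+1+n)) (hv : m + 1 ≤ v.1) :
    chi (n := n) A v = 0 := by
  rw [chi, Finsupp.finset_sum_apply]
  apply Finset.sum_eq_zero
  intro i _
  apply Finsupp.single_eq_of_ne
  intro h
  have : (yI (n := n) i).1 = v.1 := by rw [h]
  simp [yI] at this
  omega

/-- a polynomial with no y-variables in its support -/
def noY (p : MvPolynomial (Fin ((m+1)+1+n)) k) : Prop :=
  ∀ d ∈ p.support, ∀ j : Fin (m+1), d (yI j) = 0

lemma noY_add {p q : MvPolynomial (Fin ((m+1)+1+n)) k} (hp : noY p) (hq : noY q) :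
    noY (p + q) := by
  intro d hd j
  have := MvPolynomial.support_add (p := p) (q := q) hd
  rcases Finset.mem_union.1 this with h | h
  exacts [hp d h j, hq d h j]

lemma noY_mul {p q : MvPolynomial (Fin ((m+1)+1+n)) k} (hp : noY p) (hq : noY q) :
    noY (p * q) := by
  intro d hd j
  obtain ⟨d1, h1, d2, h2, rfl⟩ := Finset.mem_add.1 (MvPolynomial.support_mul p q hd)
  simp [Finsupp.add_apply, hp d1 h1 j, hq d2 h2 j]

lemma noY_Z : noY (X zI : MvPolynomial (Fin ((m+1)+1+n)) k) := by
  intro d hd j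
  rw [MvPolynomial.support_X] at hd
  simp at hd; subst hd
  apply Finsupp.single_eq_of_ne
  intro h
  have : (zI (n := n) (m := m)).1 = (yI (n := n) j).1 := by rw [h]
  simp [zI, yI] at this; omega

lemma noY_C (c : k) : noY (C c : MvPolynomial (Fin ((m+1)+1+n)) k) := by
  intro d hd j
  rw [MvPolynomial.C_apply, MvPolynomial.support_monomial] at hd
  split at hd
  · simp at hd
  · simp at hd; subst hd; rfl

lemma noY_one : noY (1 : MvPolynomial (Fin ((m+1)+1+n)) k) := noY_C 1

lemma noY_pow {p : MvPolynomial (Fin ((m+1)+1+n)) k} (hp : noY p) (a : ℕ) : noY (p ^ a) := by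
  induction a with
  | zero => simpa using noY_one
  | succ a ih => rw [pow_succ]; exact noY_mul ih hp

lemma noY_rename (q : MvPolynomial (Fin n) k) :
    noY (rename (xI (m := m)) q) := by
  intro d hd j
  have := MvPolynomial.support_rename_of_injective (p := q) (f := xI (m := m))
    (by intro a b h; simpa [xI, Fin.ext_iff] using h) ▸ hd
  simp only [Finset.mem_image] at this
  obtain ⟨d0, _, rfl⟩ := this
  apply Finsupp.mapDomain_notin_range
  rintro ⟨j', hj⟩
  have := congrArg Fin.val hj
  simp [xI, yI] at this
  omega

lemma noY_prod {s : Finset (Fin (m+1))} {g : Fin (m+1) → MvPolynomial (Fin ((m+1)+1+n)) k}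
    (h : ∀ i ∈ s, noY (g i)) : noY (∏ i ∈ s, g i) := by
  classical
  induction s using Finset.induction with
  | empty => simpa using noY_one
  | insert _ _ hx ih =>
    rw [Finset.prod_insert hx]
    exact noY_mul (h _ (Finset.mem_insert_self _ _))
      (ih fun i hi => h i (Finset.mem_insert_of_mem hi))

lemma prod_Y (A : Finset (Fin (m+1))) :
    (∏ i ∈ A, (X (yI i) : MvPolynomial (Fin ((m+1)+1+n)) k)) = monomial (chi A) 1 := by
  classical
  induction A using Finset.induction with
  | empty => simp [chi]
  | insert _ _ hx ih =>
    rename_i a s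
    rw [Finset.prod_insert hx, ih,
      show (X (yI a) : MvPolynomial (Fin ((m+1)+1+n)) k) = monomial (Finsupp.single (yI a) 1) 1
        from rfl,
      MvPolynomial.monomial_mul, one_mul]
    congr 1
    rw [chi, chi, Finset.sum_insert hx]

lemma supp_monomial_mul {q : MvPolynomial (Fin ((m+1)+1+n)) k} {w d : Fin ((m+1)+1+n) →₀ ℕ}
    (hd : d ∈ (monomial w (1 : k) * q).support) :
    ∃ d2 ∈ q.support, d = w + d2 := by
  obtain ⟨d1, h1, d2, h2, rfl⟩ := Finset.mem_add.1 (MvPolynomial.support_mul _ q hd)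
  rw [MvPolynomial.support_monomial, if_neg one_ne_zero] at h1
  simp at h1; subst h1
  exact ⟨d2, h2, rfl⟩


end GBaux

namespace GBaux
open Finsupp
open scoped Classical
variable {k : Type*} [Field k] {n m : ℕ} (f : Fin (m+1) → MvPolynomial (Fin n) k)

/-- the renamed f's -/
noncomputable def Fr (i : Fin (m+1)) : MvPolynomial (Fin ((m+1)+1+n)) k :=
  rename (xI (m := m)) (f i)

noncomputable def bin (i : Fin (m+1)) : MvPolynomial (Fin ((m+1)+1+n)) k :=
  X (yI i) ^ 2 - X zI * Fr f i ^ 2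

noncomputable def gE : MvPolynomial (Fin ((m+1)+1+n)) k :=
  gEvenFull (fun i => X (yI i)) (Fr f) (X zI)

noncomputable def gO : MvPolynomial (Fin ((m+1)+1+n)) k :=
  gOddFull (fun i => X (yI i)) (Fr f) (X zI)

/-- the non-y part of an even/odd term -/
noncomputable def qTerm (S : Finset (Fin (m+1))) (a : ℕ) : MvPolynomial (Fin ((m+1)+1+n)) k :=
  (∏ i ∈ S, Fr f i) * (X zI) ^ a

lemma noY_Fr (i : Fin (m+1)) : noY (Fr f i) := noY_rename (f i)

lemma noY_qTerm (S : Finset (Fin (m+1))) (a : ℕ) : noY (qTerm f S a) :=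
  noY_mul (noY_prod fun i _ => noY_Fr f i) (noY_pow noY_Z a)

lemma term_eq (S : Finset (Fin (m+1))) (a : ℕ) :
    (∏ i ∈ Sᶜ, (X (yI i) : MvPolynomial (Fin ((m+1)+1+n)) k)) * (∏ i ∈ S, Fr f i) *
      (X zI) ^ a = monomial (chi Sᶜ) 1 * qTerm f S a := by
  rw [prod_Y, qTerm, mul_assoc]

lemma gE_eq : gE f = ∑ S ∈ Finset.univ.powerset.filter
    (fun S : Finset (Fin (m+1)) => Even S.card),
    monomial (chi Sᶜ) (1 : k) * qTerm f S (S.card / 2) := by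
  rw [gE, gEvenFull]
  exact Finset.sum_congr rfl fun S _ => term_eq f S _

lemma gO_eq : gO f = ∑ S ∈ Finset.univ.powerset.filter
    (fun S : Finset (Fin (m+1)) => Odd S.card),
    monomial (chi Sᶜ) (1 : k) * qTerm f S ((S.card - 1) / 2) := by
  rw [gO, gOddFull]
  exact Finset.sum_congr rfl fun S _ => term_eq f S _

/-- lex comparison via the y-block -/
lemma lex_lt_y {d t : Fin ((m+1)+1+n) →₀ ℕ} (i : Fin (m+1))
    (heq : ∀ j : Fin (m+1), j < i → d (yI j) = t (yI j))
    (hlt : d (yI i) < t (yI i)) : toLex d < toLex t := by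
  rw [Finsupp.Lex.lt_iff]
  refine ⟨yI i, fun w hw => ?_, hlt⟩
  have hwv : w.1 < i.1 := hw
  have : w = yI (⟨w.1, by have := i.2; omega⟩ : Fin (m+1)) := by
    simp [yI]
  rw [this]
  exact heq _ (by simpa [Fin.lt_def] using hwv)

lemma min'_ne_last {S : Finset (Fin (m+1))} (hS : S.Nonempty) (hne : S ≠ {Fin.last m}) :
    S.min' hS ≠ Fin.last m := by
  intro h
  apply hne
  apply Finset.eq_singleton_iff_unique_mem.2
  constructor
  · rw [← h]; exact S.min'_mem hS
  · intro x hx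
    have := S.min'_le x hx
    rw [h] at this
    exact le_antisymm (Fin.le_last x) this



lemma Fr_ne_zero' (i : Fin (m+1)) (hfi : f i ≠ 0) : Fr f i ≠ 0 := by
  rw [Fr, Ne, map_eq_zero_iff]
  · exact hfi
  · exact MvPolynomial.rename_injective _ (by intro a b hab; simpa [xI, Fin.ext_iff] using hab)


/-- support elements of a term -/
lemma term_supp {S : Finset (Fin (m+1))} {a : ℕ} {d : Fin ((m+1)+1+n) →₀ ℕ}
    (hd : d ∈ (monomial (chi Sᶜ) (1:k) * qTerm f S a).support) :
    ∃ d2 ∈ (qTerm f S a).support, d = chi Sᶜ + d2 :=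
  supp_monomial_mul hd

lemma term_supp_y {S : Finset (Fin (m+1))} {a : ℕ} {d : Fin ((m+1)+1+n) →₀ ℕ}
    (hd : d ∈ (monomial (chi Sᶜ) (1:k) * qTerm f S a).support) (j : Fin (m+1)) :
    d (yI j) = if j ∈ S then 0 else 1 := by
  obtain ⟨d2, h2, rfl⟩ := term_supp f hd
  rw [Finsupp.add_apply, noY_qTerm f S a d2 h2 j, add_zero, chi_apply_y]
  by_cases h : j ∈ S <;> simp [h]

/-- coefficient of a term at an exponent whose y-pattern differs -/
lemma term_coeff_zero {S : Finset (Fin (m+1))} {a : ℕ} {t : Fin ((m+1)+1+n) →₀ ℕ}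
    (i : Fin (m+1)) (hiS : i ∈ S) (ht : 1 ≤ t (yI i)) :
    MvPolynomial.coeff t (monomial (chi Sᶜ) (1:k) * qTerm f S a) = 0 := by
  by_contra h
  have hd := term_supp_y f (MvPolynomial.mem_support_iff.2 h) i
  rw [if_pos hiS] at hd
  omega

lemma chiU_apply (j : Fin (m+1)) : chi (n := n) (Finset.univ : Finset (Fin (m+1))) (yI j) = 1 := by
  rw [chi_apply_y]; simp

lemma coeff_gE_lead : MvPolynomial.coeff (chi Finset.univ) (gE f) = 1 := by
  rw [gE_eq, MvPolynomial.coeff_sum]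
  rw [Finset.sum_eq_single (∅ : Finset (Fin (m+1)))]
  · simp only [Finset.card_empty, Nat.zero_div, qTerm, Finset.prod_empty, pow_zero, mul_one,
      one_mul]
    rw [MvPolynomial.coeff_monomial]
    simp
  · intro S _ hSne
    obtain ⟨i, hi⟩ := Finset.nonempty_iff_ne_empty.2 hSne
    exact term_coeff_zero f i hi (by rw [chiU_apply])
  · intro h
    simp at h

lemma gE_supp_le {d : Fin ((m+1)+1+n) →₀ ℕ} (hd : d ∈ (gE f).support) :
    toLex d ≤ toLex (chi (n := n) (Finset.univ : Finset (Fin (m+1)))) := by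
  rw [gE_eq] at hd
  have := MvPolynomial.support_sum hd
  rw [Finset.mem_biUnion] at this
  obtain ⟨S, hS, hdS⟩ := this
  rcases eq_or_ne S ∅ with rfl | hSne
  · obtain ⟨d2, h2, rfl⟩ := term_supp f hdS
    have : d2 = 0 := by
      simp only [qTerm, Finset.prod_empty, Finset.card_empty, Nat.zero_div, pow_zero,
        one_mul] at h2
      rw [MvPolynomial.mem_support_iff, MvPolynomial.coeff_one] at h2
      by_contra hne0
      rw [if_neg (fun h => hne0 h.symm)] at h2
      exact h2 rfl
    subst this
    simp
  · apply le_of_lt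
    have hne : S.Nonempty := Finset.nonempty_iff_ne_empty.2 hSne
    apply lex_lt_y (S.min' hne)
    · intro j hj
      rw [term_supp_y f hdS, chiU_apply, if_neg]
      intro hjS
      exact absurd (S.min'_le j hjS) (not_le.2 hj)
    · rw [term_supp_y f hdS, chiU_apply, if_pos (S.min'_mem hne)]
      omega

lemma leadMon_gE : leadMon (gE f) = chi (n := n) (Finset.univ : Finset (Fin (m+1))) :=
  leadMon_eq_of (by rw [coeff_gE_lead]; exact one_ne_zero) (fun d hd => gE_supp_le f hd)

/-- the leading exponent of g odd -/
noncomputable def tOdd : Fin ((m+1)+1+n) →₀ ℕ :=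
  chi ({Fin.last m}ᶜ) + leadMon (Fr f (Fin.last m))

lemma lmF_y (i : Fin (m+1)) (hfi : f i ≠ 0) (j : Fin (m+1)) :
    leadMon (Fr f i) (yI j) = 0 :=
  noY_Fr f i _ (leadMon_mem (Fr_ne_zero' f i hfi)) j

lemma tOdd_y (hfm : f (Fin.last m) ≠ 0) (j : Fin (m+1)) :
    tOdd f (yI j) = if j = Fin.last m then 0 else 1 := by
  rw [tOdd, Finsupp.add_apply, lmF_y f _ hfm, add_zero, chi_apply_y]
  by_cases h : j = Fin.last m <;> simp [h]

lemma coeff_gO_lead (hfm : f (Fin.last m) ≠ 0) :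
    MvPolynomial.coeff (tOdd f) (gO f) =
      MvPolynomial.coeff (leadMon (Fr f (Fin.last m))) (Fr f (Fin.last m)) := by
  rw [gO_eq, MvPolynomial.coeff_sum]
  rw [Finset.sum_eq_single ({Fin.last m} : Finset (Fin (m+1)))]
  · simp only [Finset.card_singleton, qTerm, Finset.prod_singleton, Nat.sub_self,
      Nat.zero_div, pow_zero, mul_one]
    rw [tOdd, MvPolynomial.coeff_monomial_mul, one_mul]
  · intro S hS hSne
    have hodd : Odd S.card := (Finset.mem_filter.1 hS).2
    have hne : S.Nonempty := by
      rcases Finset.eq_empty_or_nonempty S with rfl | h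
      · simp at hodd
      · exact h
    apply term_coeff_zero f (S.min' hne) (S.min'_mem hne)
    rw [tOdd_y f hfm, if_neg (min'_ne_last hne hSne)]
  · intro h
    exfalso; apply h
    simp [Nat.odd_iff]

lemma gO_supp_le (hfm : f (Fin.last m) ≠ 0) {d : Fin ((m+1)+1+n) →₀ ℕ}
    (hd : d ∈ (gO f).support) : toLex d ≤ toLex (tOdd f) := by
  rw [gO_eq] at hd
  have := MvPolynomial.support_sum hd
  rw [Finset.mem_biUnion] at this
  obtain ⟨S, hS, hdS⟩ := this
  have hodd : Odd S.card := (Finset.mem_filter.1 hS).2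
  have hne : S.Nonempty := by
    rcases Finset.eq_empty_or_nonempty S with rfl | h
    · simp at hodd
    · exact h
  rcases eq_or_ne S ({Fin.last m} : Finset (Fin (m+1))) with rfl | hSne
  · obtain ⟨d2, h2, rfl⟩ := term_supp f hdS
    have h2' : d2 ∈ (Fr f (Fin.last m)).support := by
      simpa [qTerm] using h2
    rw [tOdd, toLex_add', toLex_add']
    exact add_le_add_right (le_leadMon h2') _
  · apply le_of_lt
    apply lex_lt_y (S.min' hne)
    · intro j hj
      have hjS : j ∉ S := fun hjS => absurd (S.min'_le j hjS) (not_le.2 hj)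
      have hjl : j ≠ Fin.last m :=
        ne_of_lt (lt_of_lt_of_le hj (Fin.le_last _))
      rw [term_supp_y f hdS, tOdd_y f hfm, if_neg hjS, if_neg hjl]
    · rw [term_supp_y f hdS, tOdd_y f hfm, if_pos (S.min'_mem hne),
        if_neg (min'_ne_last hne hSne)]
      omega

lemma leadMon_gO (hfm : f (Fin.last m) ≠ 0) : leadMon (gO f) = tOdd f :=
  leadMon_eq_of
    (by rw [coeff_gO_lead f hfm]; exact coeff_leadMon_ne_zero (Fr_ne_zero' f _ hfm))
    (fun d hd => gO_supp_le f hfm hd)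

lemma gO_ne_zero (hfm : f (Fin.last m) ≠ 0) : gO f ≠ 0 := by
  intro h
  have := coeff_gO_lead f hfm
  rw [h] at this
  simp at this
  exact coeff_leadMon_ne_zero (Fr_ne_zero' f _ hfm) this.symm

lemma gE_ne_zero : gE f ≠ 0 := by
  intro h
  have := coeff_gE_lead f
  rw [h] at this
  simp at this

/-- leading data of the binomials -/
lemma coeff_bin_lead (i : Fin (m+1)) :
    MvPolynomial.coeff (Finsupp.single (yI (n := n) i) 2) (bin f i) = 1 := by
  rw [bin, MvPolynomial.coeff_sub, MvPolynomial.X_pow_eq_monomial, MvPolynomial.coeff_monomial,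
    if_pos rfl]
  have : MvPolynomial.coeff (Finsupp.single (yI (n := n) i) 2) (X zI * Fr f i ^ 2) = 0 := by
    by_contra h
    have hm := MvPolynomial.mem_support_iff.2 h
    have hnoY : noY (X (zI (n := n) (m := m)) * Fr f i ^ 2) :=
      noY_mul noY_Z (noY_pow (noY_Fr f i) 2)
    have := hnoY _ hm i
    rw [Finsupp.single_apply, if_pos rfl] at this
    omega
  rw [this, sub_zero]

lemma bin_supp_le (i : Fin (m+1)) {d : Fin ((m+1)+1+n) →₀ ℕ} (hd : d ∈ (bin f i).support) :
    toLex d ≤ toLex (Finsupp.single (yI (n := n) i) 2) := by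
  rw [bin, sub_eq_add_neg] at hd
  rcases Finset.mem_union.1 (MvPolynomial.support_add hd) with h | h
  · rw [MvPolynomial.X_pow_eq_monomial, MvPolynomial.support_monomial, if_neg one_ne_zero] at h
    simp at h; subst h; rfl
  · rw [MvPolynomial.support_neg] at h
    apply le_of_lt
    have hnoY : noY (X (zI (n := n) (m := m)) * Fr f i ^ 2) :=
      noY_mul noY_Z (noY_pow (noY_Fr f i) 2)
    apply lex_lt_y i
    · intro j hj
      rw [hnoY d h j, Finsupp.single_apply, if_neg]
      intro hji
      exact (ne_of_lt hj) (yI_inj hji).symm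
    · rw [hnoY d h i, Finsupp.single_apply, if_pos rfl]
      omega

lemma leadMon_bin (i : Fin (m+1)) : leadMon (bin f i) = Finsupp.single (yI (n := n) i) 2 :=
  leadMon_eq_of (by rw [coeff_bin_lead]; exact one_ne_zero) (fun d hd => bin_supp_le f i hd)

lemma bin_ne_zero (i : Fin (m+1)) : bin f i ≠ 0 := by
  intro h
  have := coeff_bin_lead f i
  rw [h] at this
  simp at this


/-- the ideal generated by the binomials -/
noncomputable def IC : Ideal (MvPolynomial (Fin ((m+1)+1+n)) k) :=
  Ideal.span (Set.range (bin f))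

lemma X_eq_monomial (v : Fin ((m+1)+1+n)) :
    (X v : MvPolynomial (Fin ((m+1)+1+n)) k) = monomial (Finsupp.single v 1) 1 := rfl

lemma chi_insert {A : Finset (Fin (m+1))} {i : Fin (m+1)} (hi : i ∉ A) :
    chi (n := n) (insert i A) = Finsupp.single (yI i) 1 + chi A := by
  rw [chi, Finset.sum_insert hi, chi]

lemma mono_chi (i : Fin (m+1)) {A : Finset (Fin (m+1))} (hi : i ∈ A) :
    (monomial (chi (n := n) A) (1 : k)) = X (yI i) * monomial (chi (A.erase i)) 1 := by
  conv_lhs => rw [← Finset.insert_erase hi, chi_insert (Finset.notMem_erase i A)]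
  rw [X_eq_monomial, MvPolynomial.monomial_mul, one_mul]

lemma pairA (i : Fin (m+1)) {S : Finset (Fin (m+1))} (hi : i ∈ S) (he : Even S.card) :
    (X (yI i) : MvPolynomial (Fin ((m+1)+1+n)) k) *
        (monomial (chi Sᶜ) 1 * qTerm f S (S.card / 2))
      = (X zI * Fr f i) *
        (monomial (chi (S.erase i)ᶜ) 1 * qTerm f (S.erase i) (((S.erase i).card - 1) / 2)) := by
  have hc2 : S.card % 2 = 0 := Nat.even_iff.1 he
  have hc1 : 1 ≤ S.card := Finset.card_pos.2 ⟨i, hi⟩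
  have hce : (S.erase i).card = S.card - 1 := Finset.card_erase_of_mem hi
  have hZ : (X zI : MvPolynomial (Fin ((m+1)+1+n)) k) ^ (S.card / 2)
      = X zI * X zI ^ (((S.erase i).card - 1) / 2) := by
    rw [← pow_succ']
    congr 1
    rw [hce]
    omega
  have hP : (∏ j ∈ S, Fr f j) = Fr f i * ∏ j ∈ S.erase i, Fr f j :=
    (Finset.mul_prod_erase S _ hi).symm
  have hM : (monomial (chi (n := n) ((S.erase i)ᶜ)) (1:k)) = X (yI i) * monomial (chi Sᶜ) 1 := by
    rw [Finset.compl_erase, chi_insert (by simp [hi]), X_eq_monomial,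
      MvPolynomial.monomial_mul, one_mul]
  rw [qTerm, qTerm, hM, hZ, hP]
  ring

lemma pairB (i : Fin (m+1)) {S : Finset (Fin (m+1))} (hi : i ∉ S) :
    (X (yI i) : MvPolynomial (Fin ((m+1)+1+n)) k) *
        (monomial (chi Sᶜ) 1 * qTerm f S (S.card / 2))
      - (X zI * Fr f i) *
        (monomial (chi (insert i S)ᶜ) 1 * qTerm f (insert i S) (((insert i S).card - 1) / 2))
      = bin f i * (monomial (chi (Sᶜ.erase i)) 1 * qTerm f S (S.card / 2)) := by
  have hci : (insert i S).card = S.card + 1 := Finset.card_insert_of_notMem hi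
  have hZ : ((insert i S).card - 1) / 2 = S.card / 2 := by rw [hci]; omega
  have hP : (∏ j ∈ insert i S, Fr f j) = Fr f i * ∏ j ∈ S, Fr f j := Finset.prod_insert hi
  have hM : (monomial (chi (n := n) Sᶜ) (1:k)) = X (yI i) * monomial (chi (Sᶜ.erase i)) 1 :=
    mono_chi i (Finset.mem_compl.2 hi)
  rw [Finset.compl_insert, hZ, qTerm, qTerm, hM, hP, bin]
  ring

lemma pairA' (i : Fin (m+1)) {S : Finset (Fin (m+1))} (hi : i ∈ S) :
    (X (yI i) : MvPolynomial (Fin ((m+1)+1+n)) k) *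
        (monomial (chi Sᶜ) 1 * qTerm f S ((S.card - 1) / 2))
      = Fr f i *
        (monomial (chi (S.erase i)ᶜ) 1 * qTerm f (S.erase i) ((S.erase i).card / 2)) := by
  have hce : (S.erase i).card = S.card - 1 := Finset.card_erase_of_mem hi
  have hP : (∏ j ∈ S, Fr f j) = Fr f i * ∏ j ∈ S.erase i, Fr f j :=
    (Finset.mul_prod_erase S _ hi).symm
  have hM : (monomial (chi (n := n) ((S.erase i)ᶜ)) (1:k)) = X (yI i) * monomial (chi Sᶜ) 1 := by
    rw [Finset.compl_erase, chi_insert (by simp [hi]), X_eq_monomial,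
      MvPolynomial.monomial_mul, one_mul]
  rw [qTerm, qTerm, hM, hce, hP]
  ring

lemma pairB' (i : Fin (m+1)) {S : Finset (Fin (m+1))} (hi : i ∉ S) (ho : Odd S.card) :
    (X (yI i) : MvPolynomial (Fin ((m+1)+1+n)) k) *
        (monomial (chi Sᶜ) 1 * qTerm f S ((S.card - 1) / 2))
      - Fr f i * (monomial (chi (insert i S)ᶜ) 1 * qTerm f (insert i S) ((insert i S).card / 2))
      = bin f i * (monomial (chi (Sᶜ.erase i)) 1 * qTerm f S ((S.card - 1) / 2)) := by
  have hc2 : S.card % 2 = 1 := Nat.odd_iff.1 ho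
  have hci : (insert i S).card = S.card + 1 := Finset.card_insert_of_notMem hi
  have hZ : (X zI : MvPolynomial (Fin ((m+1)+1+n)) k) ^ ((insert i S).card / 2)
      = X zI * X zI ^ ((S.card - 1) / 2) := by
    rw [← pow_succ']
    congr 1
    rw [hci]
    omega
  have hP : (∏ j ∈ insert i S, Fr f j) = Fr f i * ∏ j ∈ S, Fr f j := Finset.prod_insert hi
  have hM : (monomial (chi (n := n) Sᶜ) (1:k)) = X (yI i) * monomial (chi (Sᶜ.erase i)) 1 :=
    mono_chi i (Finset.mem_compl.2 hi)
  rw [Finset.compl_insert, qTerm, qTerm, hM, hP, hZ, bin]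
  ring

lemma mem_even_filter {S : Finset (Fin (m+1))} :
    S ∈ Finset.univ.powerset.filter (fun S : Finset (Fin (m+1)) => Even S.card)
      ↔ Even S.card := by
  simp

lemma mem_odd_filter {S : Finset (Fin (m+1))} :
    S ∈ Finset.univ.powerset.filter (fun S : Finset (Fin (m+1)) => Odd S.card)
      ↔ Odd S.card := by
  simp

/-- `y_i * gE - z * F_i * gO` is an explicit combination of the binomials -/
lemma swapE (i : Fin (m+1)) :
    (X (yI i) : MvPolynomial (Fin ((m+1)+1+n)) k) * gE f - X zI * Fr f i * gO f
      = ∑ S ∈ (Finset.univ.powerset.filter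
            (fun S : Finset (Fin (m+1)) => Even S.card)).filter (fun S => i ∉ S),
          bin f i * (monomial (chi (Sᶜ.erase i)) 1 * qTerm f S (S.card / 2)) := by
  classical
  rw [gE_eq, gO_eq, Finset.mul_sum, Finset.mul_sum]
  rw [← Finset.sum_filter_add_sum_filter_not
    (Finset.univ.powerset.filter (fun S : Finset (Fin (m+1)) => Even S.card))
    (fun S => i ∈ S)
    (fun S => (X (yI i) : MvPolynomial (Fin ((m+1)+1+n)) k) *
      (monomial (chi Sᶜ) 1 * qTerm f S (S.card / 2)))]
  rw [← Finset.sum_filter_add_sum_filter_not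
    (Finset.univ.powerset.filter (fun S : Finset (Fin (m+1)) => Odd S.card))
    (fun S => i ∈ S)
    (fun S => (X zI * Fr f i : MvPolynomial (Fin ((m+1)+1+n)) k) *
      (monomial (chi Sᶜ) 1 * qTerm f S ((S.card - 1) / 2)))]
  have hAD : ∑ S ∈ (Finset.univ.powerset.filter
        (fun S : Finset (Fin (m+1)) => Even S.card)).filter (fun S => i ∈ S),
        (X (yI i) : MvPolynomial (Fin ((m+1)+1+n)) k) *
          (monomial (chi Sᶜ) 1 * qTerm f S (S.card / 2))
      = ∑ S ∈ (Finset.univ.powerset.filter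
        (fun S : Finset (Fin (m+1)) => Odd S.card)).filter (fun S => ¬ i ∈ S),
        (X zI * Fr f i : MvPolynomial (Fin ((m+1)+1+n)) k) *
          (monomial (chi Sᶜ) 1 * qTerm f S ((S.card - 1) / 2)) := by
    apply Finset.sum_nbij' (fun S => S.erase i) (fun S => insert i S)
    · intro S hS
      rw [Finset.mem_filter] at hS ⊢
      obtain ⟨hS1, hS2⟩ := hS
      have he : Even S.card := (Finset.mem_filter.1 hS1).2
      refine ⟨mem_odd_filter.2 ?_, Finset.notMem_erase i S⟩
      rw [Finset.card_erase_of_mem hS2, Nat.odd_iff]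
      have := Nat.even_iff.1 he
      have : 1 ≤ S.card := Finset.card_pos.2 ⟨i, hS2⟩
      omega
    · intro S hS
      rw [Finset.mem_filter] at hS ⊢
      obtain ⟨hS1, hS2⟩ := hS
      have ho : Odd S.card := (Finset.mem_filter.1 hS1).2
      refine ⟨mem_even_filter.2 ?_, Finset.mem_insert_self i S⟩
      rw [Finset.card_insert_of_notMem hS2, Nat.even_iff]
      have := Nat.odd_iff.1 ho
      omega
    · intro S hS
      exact Finset.insert_erase (Finset.mem_filter.1 hS).2
    · intro S hS
      exact Finset.erase_insert (Finset.mem_filter.1 hS).2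
    · intro S hS
      rw [Finset.mem_filter] at hS
      exact pairA f i hS.2 (mem_even_filter.1 hS.1)
  have hCB : ∑ S ∈ (Finset.univ.powerset.filter
        (fun S : Finset (Fin (m+1)) => Odd S.card)).filter (fun S => i ∈ S),
        (X zI * Fr f i : MvPolynomial (Fin ((m+1)+1+n)) k) *
          (monomial (chi Sᶜ) 1 * qTerm f S ((S.card - 1) / 2))
      = ∑ S ∈ (Finset.univ.powerset.filter
        (fun S : Finset (Fin (m+1)) => Even S.card)).filter (fun S => ¬ i ∈ S),
        (X zI * Fr f i : MvPolynomial (Fin ((m+1)+1+n)) k) *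
          (monomial (chi (insert i S)ᶜ) 1 * qTerm f (insert i S) (((insert i S).card - 1) / 2)) := by
    apply Finset.sum_nbij' (fun S => S.erase i) (fun S => insert i S)
    · intro S hS
      rw [Finset.mem_filter] at hS ⊢
      obtain ⟨hS1, hS2⟩ := hS
      have ho : Odd S.card := (Finset.mem_filter.1 hS1).2
      refine ⟨mem_even_filter.2 ?_, Finset.notMem_erase i S⟩
      rw [Finset.card_erase_of_mem hS2, Nat.even_iff]
      have := Nat.odd_iff.1 ho
      omega
    · intro S hS
      rw [Finset.mem_filter] at hS ⊢
      obtain ⟨hS1, hS2⟩ := hS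
      have he : Even S.card := (Finset.mem_filter.1 hS1).2
      refine ⟨mem_odd_filter.2 ?_, by simp⟩
      rw [Finset.card_insert_of_notMem hS2, Nat.odd_iff]
      have := Nat.even_iff.1 he
      omega
    · intro S hS
      exact Finset.insert_erase (Finset.mem_filter.1 hS).2
    · intro S hS
      exact Finset.erase_insert (Finset.mem_filter.1 hS).2
    · intro S hS
      rw [Finset.mem_filter] at hS
      have hiS := hS.2
      rw [show S = insert i (S.erase i) from (Finset.insert_erase hiS).symm]
      rw [Finset.erase_insert (Finset.notMem_erase i S)]
  rw [hAD, hCB]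
  rw [show ∀ A B C : MvPolynomial (Fin ((m+1)+1+n)) k, (A + B) - (C + A) = B - C from
    fun A B C => by ring]
  rw [← Finset.sum_sub_distrib]
  exact Finset.sum_congr rfl fun S hS => pairB f i (Finset.mem_filter.1 hS).2

/-- `y_i * gO - F_i * gE` is an explicit combination of the binomials -/
lemma swapO (i : Fin (m+1)) :
    (X (yI i) : MvPolynomial (Fin ((m+1)+1+n)) k) * gO f - Fr f i * gE f
      = ∑ S ∈ (Finset.univ.powerset.filter
            (fun S : Finset (Fin (m+1)) => Odd S.card)).filter (fun S => i ∉ S),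
          bin f i * (monomial (chi (Sᶜ.erase i)) 1 * qTerm f S ((S.card - 1) / 2)) := by
  classical
  rw [gE_eq, gO_eq, Finset.mul_sum, Finset.mul_sum]
  rw [← Finset.sum_filter_add_sum_filter_not
    (Finset.univ.powerset.filter (fun S : Finset (Fin (m+1)) => Odd S.card))
    (fun S => i ∈ S)
    (fun S => (X (yI i) : MvPolynomial (Fin ((m+1)+1+n)) k) *
      (monomial (chi Sᶜ) 1 * qTerm f S ((S.card - 1) / 2)))]
  rw [← Finset.sum_filter_add_sum_filter_not
    (Finset.univ.powerset.filter (fun S : Finset (Fin (m+1)) => Even S.card))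
    (fun S => i ∈ S)
    (fun S => (Fr f i : MvPolynomial (Fin ((m+1)+1+n)) k) *
      (monomial (chi Sᶜ) 1 * qTerm f S (S.card / 2)))]
  have hAD : ∑ S ∈ (Finset.univ.powerset.filter
        (fun S : Finset (Fin (m+1)) => Odd S.card)).filter (fun S => i ∈ S),
        (X (yI i) : MvPolynomial (Fin ((m+1)+1+n)) k) *
          (monomial (chi Sᶜ) 1 * qTerm f S ((S.card - 1) / 2))
      = ∑ S ∈ (Finset.univ.powerset.filter
        (fun S : Finset (Fin (m+1)) => Even S.card)).filter (fun S => ¬ i ∈ S),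
        (Fr f i : MvPolynomial (Fin ((m+1)+1+n)) k) *
          (monomial (chi Sᶜ) 1 * qTerm f S (S.card / 2)) := by
    apply Finset.sum_nbij' (fun S => S.erase i) (fun S => insert i S)
    · intro S hS
      rw [Finset.mem_filter] at hS ⊢
      obtain ⟨hS1, hS2⟩ := hS
      have ho : Odd S.card := (Finset.mem_filter.1 hS1).2
      refine ⟨mem_even_filter.2 ?_, Finset.notMem_erase i S⟩
      rw [Finset.card_erase_of_mem hS2, Nat.even_iff]
      have := Nat.odd_iff.1 ho
      omega
    · intro S hS
      rw [Finset.mem_filter] at hS ⊢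
      obtain ⟨hS1, hS2⟩ := hS
      have he : Even S.card := (Finset.mem_filter.1 hS1).2
      refine ⟨mem_odd_filter.2 ?_, Finset.mem_insert_self i S⟩
      rw [Finset.card_insert_of_notMem hS2, Nat.odd_iff]
      have := Nat.even_iff.1 he
      omega
    · intro S hS
      exact Finset.insert_erase (Finset.mem_filter.1 hS).2
    · intro S hS
      exact Finset.erase_insert (Finset.mem_filter.1 hS).2
    · intro S hS
      rw [Finset.mem_filter] at hS
      exact pairA' f i hS.2
  have hCB : ∑ S ∈ (Finset.univ.powerset.filter
        (fun S : Finset (Fin (m+1)) => Even S.card)).filter (fun S => i ∈ S),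
        (Fr f i : MvPolynomial (Fin ((m+1)+1+n)) k) *
          (monomial (chi Sᶜ) 1 * qTerm f S (S.card / 2))
      = ∑ S ∈ (Finset.univ.powerset.filter
        (fun S : Finset (Fin (m+1)) => Odd S.card)).filter (fun S => ¬ i ∈ S),
        (Fr f i : MvPolynomial (Fin ((m+1)+1+n)) k) *
          (monomial (chi (insert i S)ᶜ) 1 * qTerm f (insert i S) ((insert i S).card / 2)) := by
    apply Finset.sum_nbij' (fun S => S.erase i) (fun S => insert i S)
    · intro S hS
      rw [Finset.mem_filter] at hS ⊢
      obtain ⟨hS1, hS2⟩ := hS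
      have he : Even S.card := (Finset.mem_filter.1 hS1).2
      refine ⟨mem_odd_filter.2 ?_, Finset.notMem_erase i S⟩
      rw [Finset.card_erase_of_mem hS2, Nat.odd_iff]
      have := Nat.even_iff.1 he
      have : 1 ≤ S.card := Finset.card_pos.2 ⟨i, hS2⟩
      omega
    · intro S hS
      rw [Finset.mem_filter] at hS ⊢
      obtain ⟨hS1, hS2⟩ := hS
      have ho : Odd S.card := (Finset.mem_filter.1 hS1).2
      refine ⟨mem_even_filter.2 ?_, by simp⟩
      rw [Finset.card_insert_of_notMem hS2, Nat.even_iff]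
      have := Nat.odd_iff.1 ho
      omega
    · intro S hS
      exact Finset.insert_erase (Finset.mem_filter.1 hS).2
    · intro S hS
      exact Finset.erase_insert (Finset.mem_filter.1 hS).2
    · intro S hS
      rw [Finset.mem_filter] at hS
      have hiS := hS.2
      rw [show S = insert i (S.erase i) from (Finset.insert_erase hiS).symm]
      rw [Finset.erase_insert (Finset.notMem_erase i S)]
  rw [hAD, hCB]
  rw [show ∀ A B C : MvPolynomial (Fin ((m+1)+1+n)) k, (A + B) - (C + A) = B - C from
    fun A B C => by ring]
  rw [← Finset.sum_sub_distrib]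
  exact Finset.sum_congr rfl fun S hS => pairB' f i (Finset.mem_filter.1 hS).2
    (mem_odd_filter.1 (Finset.mem_filter.1 hS).1)

lemma swapE_mem (i : Fin (m+1)) :
    (X (yI i) : MvPolynomial (Fin ((m+1)+1+n)) k) * gE f - X zI * Fr f i * gO f ∈ IC f := by
  rw [swapE]
  exact Ideal.sum_mem _ fun S _ =>
    Ideal.mul_mem_right _ _ (Ideal.subset_span ⟨i, rfl⟩)

lemma swapO_mem (i : Fin (m+1)) :
    (X (yI i) : MvPolynomial (Fin ((m+1)+1+n)) k) * gO f - Fr f i * gE f ∈ IC f := by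
  rw [swapO]
  exact Ideal.sum_mem _ fun S _ =>
    Ideal.mul_mem_right _ _ (Ideal.subset_span ⟨i, rfl⟩)


/-- the full ideal -/
noncomputable def Jid : Ideal (MvPolynomial (Fin ((m+1)+1+n)) k) :=
  Ideal.span (Set.range (bin f) ∪ {gE f, gO f})

/-- the normal form predicate for membership in `J` -/
def Jnf (p : MvPolynomial (Fin ((m+1)+1+n)) k) : Prop :=
  ∃ c ∈ IC f, ∃ r s : MvPolynomial (Fin ((m+1)+1+n)) k,
    noY r ∧ noY s ∧ p = c + r * gE f + s * gO f

lemma Jnf_add {p q : MvPolynomial (Fin ((m+1)+1+n)) k} (hp : Jnf f p) (hq : Jnf f q) :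
    Jnf f (p + q) := by
  obtain ⟨c1, hc1, r1, s1, hr1, hs1, rfl⟩ := hp
  obtain ⟨c2, hc2, r2, s2, hr2, hs2, rfl⟩ := hq
  exact ⟨c1 + c2, Ideal.add_mem _ hc1 hc2, r1 + r2, s1 + s2,
    noY_add hr1 hr2, noY_add hs1 hs2, by ring⟩

lemma Jnf_zero : Jnf f (0 : MvPolynomial (Fin ((m+1)+1+n)) k) :=
  ⟨0, Ideal.zero_mem _, 0, 0, by intro d hd; simp at hd, by intro d hd; simp at hd, by ring⟩

lemma noY_zero : noY (0 : MvPolynomial (Fin ((m+1)+1+n)) k) := by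
  intro d hd; simp at hd

lemma Jnf_C_mul (a : k) {q : MvPolynomial (Fin ((m+1)+1+n)) k} (hq : Jnf f q) :
    Jnf f (C a * q) := by
  obtain ⟨c, hc, r, s, hr, hs, rfl⟩ := hq
  exact ⟨C a * c, Ideal.mul_mem_left _ _ hc, C a * r, C a * s,
    noY_mul (noY_C a) hr, noY_mul (noY_C a) hs, by ring⟩

lemma noY_X_hi (v : Fin ((m+1)+1+n)) (hv : m + 1 ≤ v.1) :
    noY (X v : MvPolynomial (Fin ((m+1)+1+n)) k) := by
  intro d hd j
  rw [MvPolynomial.support_X] at hd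
  simp at hd; subst hd
  apply Finsupp.single_eq_of_ne
  intro h
  have := congrArg Fin.val h
  simp [yI] at this
  omega

lemma Jnf_X_mul (v : Fin ((m+1)+1+n)) {q : MvPolynomial (Fin ((m+1)+1+n)) k} (hq : Jnf f q) :
    Jnf f (X v * q) := by
  obtain ⟨c, hc, r, s, hr, hs, rfl⟩ := hq
  by_cases hv : v.1 ≤ m
  · -- v is a y-variable
    set i : Fin (m+1) := ⟨v.1, by omega⟩ with hi
    have hvy : v = yI i := by simp [yI, hi]
    refine ⟨X v * c + r * (X (yI i) * gE f - X zI * Fr f i * gO f)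
        + s * (X (yI i) * gO f - Fr f i * gE f), ?_,
      s * Fr f i, r * (X zI * Fr f i),
      noY_mul hs (noY_Fr f i), noY_mul hr (noY_mul noY_Z (noY_Fr f i)), ?_⟩
    · exact Ideal.add_mem _ (Ideal.add_mem _ (Ideal.mul_mem_left _ _ hc)
        (Ideal.mul_mem_left _ _ (swapE_mem f i))) (Ideal.mul_mem_left _ _ (swapO_mem f i))
    · rw [hvy]; ring
  · -- v is z or an x-variable
    exact ⟨X v * c, Ideal.mul_mem_left _ _ hc, X v * r, X v * s,
      noY_mul (noY_X_hi v (by omega)) hr, noY_mul (noY_X_hi v (by omega)) hs, by ring⟩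

lemma Jnf_mul (t : MvPolynomial (Fin ((m+1)+1+n)) k) {q : MvPolynomial (Fin ((m+1)+1+n)) k}
    (hq : Jnf f q) : Jnf f (t * q) := by
  induction t using MvPolynomial.induction_on generalizing q with
  | C a => exact Jnf_C_mul f a hq
  | add p1 p2 h1 h2 =>
    rw [add_mul]
    exact Jnf_add f (h1 hq) (h2 hq)
  | mul_X p v h =>
    rw [mul_assoc]
    exact h (Jnf_X_mul f v hq)

lemma Jnf_of_mem {p : MvPolynomial (Fin ((m+1)+1+n)) k} (hp : p ∈ Jid f) : Jnf f p := by
  refine Submodule.span_induction ?_ (Jnf_zero f) (fun a b _ _ ha hb => Jnf_add f ha hb)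
    (fun t a _ ha => Jnf_mul f t ha) hp
  rintro x (⟨i, rfl⟩ | hx)
  · exact ⟨bin f i, Ideal.subset_span ⟨i, rfl⟩, 0, 0, noY_zero, noY_zero, by ring⟩
  · rcases hx with rfl | rfl
    · exact ⟨0, Ideal.zero_mem _, 1, 0, noY_one, noY_zero, by ring⟩
    · exact ⟨0, Ideal.zero_mem _, 0, 1, noY_zero, noY_one, by ring⟩

lemma bin_mem_J (i : Fin (m+1)) : bin f i ∈ Jid f :=
  Ideal.subset_span (Or.inl ⟨i, rfl⟩)

lemma gE_mem_J : gE f ∈ Jid f := Ideal.subset_span (Or.inr (by simp))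

lemma gO_mem_J : gO f ∈ Jid f := Ideal.subset_span (Or.inr (by simp))


/-- squarefree in the y-variables -/
def sqf (p : MvPolynomial (Fin ((m+1)+1+n)) k) : Prop :=
  ∀ d ∈ p.support, ∀ j : Fin (m+1), d (yI j) ≤ 1

/-- the "even parts" of the y-exponents -/
noncomputable def twos (d : Fin ((m+1)+1+n) →₀ ℕ) : Fin ((m+1)+1+n) →₀ ℕ :=
  ∑ j : Fin (m+1), Finsupp.single (yI j) (2 * (d (yI j) / 2))

lemma twos_apply_y (d : Fin ((m+1)+1+n) →₀ ℕ) (j : Fin (m+1)) :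
    twos (n := n) d (yI j) = 2 * (d (yI j) / 2) := by
  rw [twos, Finsupp.finset_sum_apply]
  simp only [Finsupp.single_apply, yI_inj.eq_iff]
  rw [Finset.sum_ite_eq' Finset.univ j (fun j' => 2 * (d (yI j') / 2))]
  simp

lemma twos_apply_hi (d : Fin ((m+1)+1+n) →₀ ℕ) (v : Fin ((m+1)+1+n)) (hv : m + 1 ≤ v.1) :
    twos (n := n) d v = 0 := by
  rw [twos, Finsupp.finset_sum_apply]
  apply Finset.sum_eq_zero
  intro j _
  apply Finsupp.single_eq_of_ne
  intro h
  have := congrArg Fin.val h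
  simp [yI] at this
  omega

lemma val_cases (v : Fin ((m+1)+1+n)) : (∃ j : Fin (m+1), v = yI j) ∨ m + 1 ≤ v.1 := by
  by_cases hv : v.1 ≤ m
  · exact Or.inl ⟨⟨v.1, by omega⟩, by simp [yI]⟩
  · exact Or.inr (by omega)

/-- image of a monomial under the reduction modulo the binomials -/
noncomputable def target (d : Fin ((m+1)+1+n) →₀ ℕ) : MvPolynomial (Fin ((m+1)+1+n)) k :=
  monomial (d - twos d) 1 * ∏ j : Fin (m+1), (X zI * Fr f j ^ 2) ^ (d (yI j) / 2)

/-- the linear reduction map modulo the binomial ideal -/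
noncomputable def Phi (p : MvPolynomial (Fin ((m+1)+1+n)) k) : MvPolynomial (Fin ((m+1)+1+n)) k :=
  Finsupp.sum (AddMonoidAlgebra.coeff p) (fun d c => C c * target f d)

lemma Phi_monomial (d : Fin ((m+1)+1+n) →₀ ℕ) (c : k) :
    Phi f (monomial d c) = C c * target f d := by
  rw [Phi, show AddMonoidAlgebra.coeff (monomial d c : MvPolynomial (Fin ((m+1)+1+n)) k) = Finsupp.single d c from
    rfl]
  rw [Finsupp.sum_single_index]
  simp

lemma Phi_add (p q : MvPolynomial (Fin ((m+1)+1+n)) k) :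
    Phi f (p + q) = Phi f p + Phi f q := by
  rw [Phi, Phi, Phi, AddMonoidAlgebra.coeff_add]
  apply Finsupp.sum_add_index
  · intro d _; simp
  · intro d _ c1 c2; rw [map_add]; ring

lemma Phi_zero : Phi f (0 : MvPolynomial (Fin ((m+1)+1+n)) k) = 0 := by
  rw [Phi]; exact Finsupp.sum_zero_index

lemma Phi_sub (p q : MvPolynomial (Fin ((m+1)+1+n)) k) :
    Phi f (p - q) = Phi f p - Phi f q := by
  have := Phi_add f (p - q) q
  rw [sub_add_cancel] at this
  rw [this]; ring

lemma Phi_sum {α : Type*} (s : Finset α) (g : α → MvPolynomial (Fin ((m+1)+1+n)) k) :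
    Phi f (∑ a ∈ s, g a) = ∑ a ∈ s, Phi f (g a) := by
  classical
  induction s using Finset.induction with
  | empty => simpa using Phi_zero f
  | insert _ _ hx ih =>
    rw [Finset.sum_insert hx, Finset.sum_insert hx, Phi_add, ih]

/-- shifting by a y-free exponent -/
lemma target_shift {d' : Fin ((m+1)+1+n) →₀ ℕ} (hd' : ∀ j : Fin (m+1), d' (yI j) = 0)
    (d : Fin ((m+1)+1+n) →₀ ℕ) :
    target (k := k) f (d + d') = monomial d' 1 * target f d := by
  have hy : ∀ j : Fin (m+1), (d + d') (yI j) = d (yI j) := by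
    intro j; rw [Finsupp.add_apply, hd' j, add_zero]
  have htwos : twos (n := n) (d + d') = twos d := by
    rw [twos, twos]
    exact Finset.sum_congr rfl fun j _ => by rw [hy j]
  have hsub : (d + d') - twos (n := n) (d + d') = (d - twos d) + d' := by
    rw [htwos]
    ext v
    rw [Finsupp.tsub_apply, Finsupp.add_apply, Finsupp.add_apply, Finsupp.tsub_apply]
    rcases val_cases v with ⟨j, rfl⟩ | hv
    · rw [hd' j, twos_apply_y]
      have : 2 * (d (yI j) / 2) ≤ d (yI j) := by omega
      omega
    · rw [twos_apply_hi d v hv]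
      omega
  rw [target, target, hsub]
  rw [Finset.prod_congr rfl fun j _ => by rw [hy j]]
  have hmm : (monomial (d - twos (n := n) d + d') (1:k))
      = monomial d' 1 * monomial (d - twos d) 1 := by
    rw [MvPolynomial.monomial_mul, one_mul, add_comm d' (d - twos d)]
  rw [hmm, mul_assoc]

/-- multiplying by `y_i^2` corresponds to multiplying the target by `z f_i^2` -/
lemma target_ysq (i : Fin (m+1)) (d : Fin ((m+1)+1+n) →₀ ℕ) :
    target (k := k) f (d + Finsupp.single (yI i) 2)
      = (X zI * Fr f i ^ 2) * target f d := by
  have hy : ∀ j : Fin (m+1),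
      (d + (Finsupp.single (yI i) 2 : Fin ((m+1)+1+n) →₀ ℕ)) (yI j)
        = d (yI j) + (if j = i then 2 else 0) := by
    intro j
    rw [Finsupp.add_apply, Finsupp.single_apply]
    congr 1
    by_cases h : j = i
    · subst h; rw [if_pos rfl, if_pos rfl]
    · rw [if_neg (fun hh => h (yI_inj hh).symm), if_neg h]
  have htwos : twos (n := n) (d + Finsupp.single (yI i) 2)
      = twos d + Finsupp.single (yI i) 2 := by
    ext v
    rw [Finsupp.add_apply]
    rcases val_cases v with ⟨j, rfl⟩ | hv
    · rw [twos_apply_y, twos_apply_y, hy j, Finsupp.single_apply]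
      by_cases h : j = i
      · subst h; rw [if_pos rfl, if_pos rfl]; omega
      · rw [if_neg h, if_neg (fun hh => h (yI_inj hh).symm)]
        omega
    · rw [twos_apply_hi _ _ hv, twos_apply_hi _ _ hv, Finsupp.single_apply,
        if_neg (fun hh : yI i = v => by
          have := congrArg Fin.val hh
          simp [yI] at this
          omega)]
      omega
  have hsub : (d + (Finsupp.single (yI (n := n) i) 2 : Fin ((m+1)+1+n) →₀ ℕ))
      - twos (d + Finsupp.single (yI i) 2) = d - twos d := by
    rw [htwos]
    ext v
    rw [Finsupp.tsub_apply, Finsupp.add_apply, Finsupp.add_apply, Finsupp.tsub_apply]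
    omega
  have hexp : ∀ j : Fin (m+1),
      (d + (Finsupp.single (yI i) 2 : Fin ((m+1)+1+n) →₀ ℕ)) (yI j) / 2
        = d (yI j) / 2 + (if j = i then 1 else 0) := by
    intro j
    rw [hy j]
    by_cases h : j = i
    · rw [if_pos h, if_pos h]; omega
    · rw [if_neg h, if_neg h]
      omega
  have hpp : (∏ j : Fin (m+1),
      ((X zI * Fr f j ^ 2 : MvPolynomial (Fin ((m+1)+1+n)) k)) ^ (if j = i then 1 else 0))
        = X zI * Fr f i ^ 2 := by
    rw [Finset.prod_eq_single i]
    · rw [if_pos rfl, pow_one]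
    · intro b _ hb; rw [if_neg hb, pow_zero]
    · intro h; simp at h
  rw [target, target, hsub]
  rw [Finset.prod_congr rfl fun j _ => by rw [hexp j, pow_add]]
  rw [Finset.prod_mul_distrib, hpp]
  ring

lemma Phi_mul_monomial_noY {d' : Fin ((m+1)+1+n) →₀ ℕ} (c' : k)
    (hd' : ∀ j : Fin (m+1), d' (yI j) = 0) (t : MvPolynomial (Fin ((m+1)+1+n)) k) :
    Phi f (t * monomial d' c') = monomial d' c' * Phi f t := by
  induction t using MvPolynomial.induction_on' with
  | add p1 p2 h1 h2 =>
    rw [add_mul, Phi_add, Phi_add, h1, h2]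
    ring
  | monomial d c =>
    rw [MvPolynomial.monomial_mul, Phi_monomial, Phi_monomial, target_shift f hd' d]
    rw [show (monomial d' c' : MvPolynomial (Fin ((m+1)+1+n)) k)
      = C c' * monomial d' 1 from by rw [MvPolynomial.C_mul_monomial, mul_one]]
    rw [map_mul]
    ring

/-- `Phi` commutes with multiplication by `y`-free polynomials -/
lemma Phi_mul_noY {q : MvPolynomial (Fin ((m+1)+1+n)) k} (hq : noY q)
    (t : MvPolynomial (Fin ((m+1)+1+n)) k) : Phi f (t * q) = q * Phi f t := by
  conv_lhs => rw [show q = ∑ d' ∈ q.support, monomial d' (MvPolynomial.coeff d' q) from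
    (MvPolynomial.support_sum_monomial_coeff q).symm]
  rw [Finset.mul_sum, Phi_sum]
  rw [Finset.sum_congr rfl fun d' hd' =>
    Phi_mul_monomial_noY f (MvPolynomial.coeff d' q) (hq d' hd') t]
  rw [← Finset.sum_mul]
  rw [MvPolynomial.support_sum_monomial_coeff q]

/-- `Phi` kills multiples of the binomials -/
lemma Phi_mul_bin (i : Fin (m+1)) (t : MvPolynomial (Fin ((m+1)+1+n)) k) :
    Phi f (t * bin f i) = 0 := by
  rw [bin, mul_sub, Phi_sub]
  rw [show (X (yI i) : MvPolynomial (Fin ((m+1)+1+n)) k) ^ 2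
    = monomial (Finsupp.single (yI i) 2) 1 from MvPolynomial.X_pow_eq_monomial]
  have h1 : Phi f (t * monomial (Finsupp.single (yI i) 2) 1)
      = (X zI * Fr f i ^ 2) * Phi f t := by
    induction t using MvPolynomial.induction_on' with
    | add p1 p2 hp1 hp2 => rw [add_mul, Phi_add, Phi_add, hp1, hp2]; ring
    | monomial d c =>
      rw [MvPolynomial.monomial_mul, mul_one, Phi_monomial, Phi_monomial, target_ysq f i d]
      ring
  have h2 : Phi f (t * (X zI * Fr f i ^ 2)) = (X zI * Fr f i ^ 2) * Phi f t :=
    Phi_mul_noY f (noY_mul noY_Z (noY_pow (noY_Fr f i) 2)) t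
  rw [h1, h2, sub_self]

/-- `Phi` kills the binomial ideal -/
lemma Phi_IC {p : MvPolynomial (Fin ((m+1)+1+n)) k} (hp : p ∈ IC f) : Phi f p = 0 := by
  have key : ∀ t : MvPolynomial (Fin ((m+1)+1+n)) k, Phi f (t * p) = 0 := by
    refine Submodule.span_induction ?_ ?_ ?_ ?_ hp
    · rintro x ⟨i, rfl⟩ t
      exact Phi_mul_bin f i t
    · intro t; rw [mul_zero]; exact Phi_zero f
    · intro a b _ _ ha hb t
      rw [mul_add, Phi_add, ha t, hb t, add_zero]
    · intro a b _ hb t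
      rw [show t * (a • b) = (t * a) * b from by rw [smul_eq_mul]; ring]
      exact hb (t * a)
  have := key 1
  rwa [one_mul] at this

/-- `Phi` is the identity on `y`-squarefree polynomials -/
lemma Phi_sqf {p : MvPolynomial (Fin ((m+1)+1+n)) k} (hp : sqf p) : Phi f p = p := by
  have htar : ∀ d ∈ p.support, target (k := k) f d = monomial d 1 := by
    intro d hd
    have hcentral : ∀ j : Fin (m+1), d (yI j) / 2 = 0 := by
      intro j
      have := hp d hd j
      omega
    rw [target]
    have h1 : (∏ j : Fin (m+1),
        ((X zI * Fr f j ^ 2 : MvPolynomial (Fin ((m+1)+1+n)) k)) ^ (d (yI j) / 2)) = 1 := by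
      apply Finset.prod_eq_one
      intro j _
      rw [hcentral j, pow_zero]
    have h2 : twos (n := n) d = 0 := by
      ext v
      rcases val_cases v with ⟨j, rfl⟩ | hv
      · rw [twos_apply_y, hcentral j]; simp
      · rw [twos_apply_hi _ _ hv]; rfl
    rw [h1, h2, mul_one, tsub_zero]
  conv_lhs => rw [show p = ∑ d ∈ p.support, monomial d (MvPolynomial.coeff d p) from
    (MvPolynomial.support_sum_monomial_coeff p).symm]
  rw [Phi_sum]
  rw [Finset.sum_congr rfl fun d hd => by
    rw [Phi_monomial, htar d hd, show (C (MvPolynomial.coeff d p) : MvPolynomial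
      (Fin ((m+1)+1+n)) k) * monomial d 1 = monomial d (MvPolynomial.coeff d p) from by
      rw [MvPolynomial.C_mul_monomial, mul_one]]]
  exact MvPolynomial.support_sum_monomial_coeff p


/-- the pattern predicate: the y-part of `d` is exactly the indicator of `w` -/
def patt (w : Finset (Fin (m+1))) (d : Fin ((m+1)+1+n) →₀ ℕ) : Prop :=
  ∀ j : Fin (m+1), d (yI j) = (if j ∈ w then 1 else 0)

/-- the selector of terms with given y-pattern -/
noncomputable def psi (w : Finset (Fin (m+1))) (p : MvPolynomial (Fin ((m+1)+1+n)) k) :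
    MvPolynomial (Fin ((m+1)+1+n)) k :=
  AddMonoidAlgebra.ofCoeff (Finsupp.filter (patt w) (AddMonoidAlgebra.coeff p))

lemma coeff_psi (w : Finset (Fin (m+1))) (p : MvPolynomial (Fin ((m+1)+1+n)) k)
    (d : Fin ((m+1)+1+n) →₀ ℕ) :
    MvPolynomial.coeff d (psi w p) = if patt w d then MvPolynomial.coeff d p else 0 := by
  rfl

lemma psi_add (w : Finset (Fin (m+1))) (p q : MvPolynomial (Fin ((m+1)+1+n)) k) :
    psi w (p + q) = psi w p + psi w q := by
  apply MvPolynomial.ext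
  intro d
  rw [MvPolynomial.coeff_add, coeff_psi, coeff_psi, coeff_psi, MvPolynomial.coeff_add]
  split <;> simp

lemma psi_zero (w : Finset (Fin (m+1))) : psi w (0 : MvPolynomial (Fin ((m+1)+1+n)) k) = 0 := by
  apply MvPolynomial.ext
  intro d
  rw [coeff_psi]
  split <;> simp

lemma psi_sum (w : Finset (Fin (m+1))) {α : Type*} (s : Finset α)
    (g : α → MvPolynomial (Fin ((m+1)+1+n)) k) :
    psi w (∑ a ∈ s, g a) = ∑ a ∈ s, psi w (g a) := by
  classical
  induction s using Finset.induction with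
  | empty => simpa using psi_zero w
  | insert _ _ hx ih => rw [Finset.sum_insert hx, Finset.sum_insert hx, psi_add, ih]

lemma psi_monomial (w : Finset (Fin (m+1))) (d : Fin ((m+1)+1+n) →₀ ℕ) (c : k) :
    psi w (monomial d c) = if patt w d then monomial d c else 0 := by
  by_cases h : patt w d
  · rw [if_pos h]
    apply MvPolynomial.ext; intro e
    rw [coeff_psi]
    by_cases hp : patt w e
    · rw [if_pos hp]
    · rw [if_neg hp, MvPolynomial.coeff_monomial, if_neg (fun hde => hp (by rw [← hde]; exact h))]
  · rw [if_neg h]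
    apply MvPolynomial.ext; intro e
    rw [coeff_psi, MvPolynomial.coeff_zero]
    by_cases hp : patt w e
    · rw [if_pos hp, MvPolynomial.coeff_monomial, if_neg (fun hde => h (by rw [hde]; exact hp))]
    · rw [if_neg hp]

lemma psi_mul_monomial_noY (w : Finset (Fin (m+1))) {d' : Fin ((m+1)+1+n) →₀ ℕ} (c' : k)
    (hd' : ∀ j : Fin (m+1), d' (yI j) = 0) (t : MvPolynomial (Fin ((m+1)+1+n)) k) :
    psi w (t * monomial d' c') = psi w t * monomial d' c' := by
  induction t using MvPolynomial.induction_on' with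
  | add p1 p2 h1 h2 => rw [add_mul, psi_add, psi_add, h1, h2, add_mul]
  | monomial d c =>
    rw [MvPolynomial.monomial_mul, psi_monomial, psi_monomial]
    have hpatt : patt w (d + d') ↔ patt w d := by
      constructor <;> intro h j <;> have := h j <;>
        rw [Finsupp.add_apply, hd' j, add_zero] at * <;> exact this
    by_cases h : patt w d
    · rw [if_pos (hpatt.2 h), if_pos h, MvPolynomial.monomial_mul]
    · rw [if_neg (fun hh => h (hpatt.1 hh)), if_neg h, zero_mul]

lemma psi_mul_noY (w : Finset (Fin (m+1))) {q : MvPolynomial (Fin ((m+1)+1+n)) k} (hq : noY q)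
    (t : MvPolynomial (Fin ((m+1)+1+n)) k) : psi w (t * q) = psi w t * q := by
  conv_lhs => rw [show q = ∑ d' ∈ q.support, monomial d' (MvPolynomial.coeff d' q) from
    (MvPolynomial.support_sum_monomial_coeff q).symm]
  rw [Finset.mul_sum, psi_sum]
  rw [Finset.sum_congr rfl fun d' hd' =>
    psi_mul_monomial_noY w (MvPolynomial.coeff d' q) (hq d' hd') t]
  rw [← Finset.mul_sum, MvPolynomial.support_sum_monomial_coeff q]

lemma psi_supp (w : Finset (Fin (m+1))) (p : MvPolynomial (Fin ((m+1)+1+n)) k)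
    {d : Fin ((m+1)+1+n) →₀ ℕ} (hd : d ∈ (psi w p).support) : d ∈ p.support ∧ patt w d := by
  rw [MvPolynomial.mem_support_iff, coeff_psi] at hd
  by_cases h : patt w d
  · rw [if_pos h] at hd
    exact ⟨MvPolynomial.mem_support_iff.2 hd, h⟩
  · rw [if_neg h] at hd
    exact absurd rfl hd

/-- selecting the pattern of a term kills terms of different pattern -/
lemma psi_term_ne (w : Finset (Fin (m+1))) {S : Finset (Fin (m+1))} (a : ℕ)
    (hWS : w ≠ Sᶜ) : psi w (monomial (chi Sᶜ) (1:k) * qTerm f S a) = 0 := by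
  apply MvPolynomial.ext
  intro d
  rw [coeff_psi, MvPolynomial.coeff_zero]
  split
  · rename_i h
    by_contra hc
    have hd := term_supp_y f (MvPolynomial.mem_support_iff.2 hc)
    apply hWS
    apply Finset.ext
    intro j
    have h1 := h j
    have h2 := hd j
    rw [Finset.mem_compl]
    by_cases hjS : j ∈ S <;> by_cases hjw : j ∈ w <;> simp_all
  · rfl

lemma psi_term_eq (w : Finset (Fin (m+1))) {S : Finset (Fin (m+1))} (a : ℕ)
    (hWS : w = Sᶜ) : psi w (monomial (chi Sᶜ) (1:k) * qTerm f S a)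
      = monomial (chi Sᶜ) (1:k) * qTerm f S a := by
  subst hWS
  apply MvPolynomial.ext
  intro d
  rw [coeff_psi]
  split
  · rfl
  · rename_i h
    by_contra hc
    have hd := term_supp_y f (MvPolynomial.mem_support_iff.2 fun hh => hc hh.symm)
    exact h fun j => by
      rw [hd j]
      by_cases hjS : j ∈ S <;> simp [hjS]

lemma psi_gE : psi Finset.univ (gE f) = monomial (chi (n := n) Finset.univ) (1:k) := by
  rw [gE_eq, psi_sum]
  rw [Finset.sum_eq_single (∅ : Finset (Fin (m+1)))]
  · rw [psi_term_eq f _ _ (by simp),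
      show ((∅ : Finset (Fin (m+1)))ᶜ) = Finset.univ from by simp]
    simp only [qTerm, Finset.prod_empty, Finset.card_empty, Nat.zero_div, pow_zero, one_mul,
      mul_one]
  · intro S _ hSne
    exact psi_term_ne f _ _ (fun h => hSne (by
      have := congrArg (fun A => Aᶜ) h
      simpa using this.symm))
  · intro h; simp at h

lemma psi_gO_univ : psi Finset.univ (gO f) = 0 := by
  rw [gO_eq, psi_sum]
  apply Finset.sum_eq_zero
  intro S hS
  have ho : Odd S.card := (Finset.mem_filter.1 hS).2
  have hne : S ≠ ∅ := by
    rintro rfl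
    simp at ho
  apply psi_term_ne
  intro h
  have := congrArg (fun A => Aᶜ) h
  simp at this
  exact hne this.symm

lemma psi_gE_lastc : psi ({Fin.last m}ᶜ) (gE f) = 0 := by
  rw [gE_eq, psi_sum]
  apply Finset.sum_eq_zero
  intro S hS
  have he : Even S.card := (Finset.mem_filter.1 hS).2
  apply psi_term_ne
  intro h
  have h2 : S = {Fin.last m} := by
    have := congrArg (fun A => Aᶜ) h
    simpa using this.symm
  rw [h2] at he
  simp at he

lemma psi_gO_lastc : psi ({Fin.last m}ᶜ) (gO f)
    = monomial (chi (n := n) ({Fin.last m}ᶜ)) (1:k) * Fr f (Fin.last m) := by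
  rw [gO_eq, psi_sum]
  rw [Finset.sum_eq_single ({Fin.last m} : Finset (Fin (m+1)))]
  · rw [psi_term_eq f _ _ rfl]
    simp only [qTerm, Finset.prod_singleton, Finset.card_singleton, Nat.sub_self, Nat.zero_div,
      pow_zero, mul_one]
  · intro S _ hSne
    exact psi_term_ne f _ _ (fun h => hSne (by
      have := congrArg (fun A => Aᶜ) h
      simpa using this.symm))
  · intro h
    exfalso; apply h
    simp [Nat.odd_iff]

/-- the divisibility condition defining the candidate initial ideal -/
def Dcond (t : Fin ((m+1)+1+n) →₀ ℕ) : Prop :=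
  (∃ i : Fin (m+1), Finsupp.single (yI i) 2 ≤ t) ∨ chi Finset.univ ≤ t ∨ tOdd f ≤ t

lemma sqf_gE : sqf (gE f) := by
  intro d hd j
  rw [gE_eq] at hd
  obtain ⟨S, _, hdS⟩ := Finset.mem_biUnion.1 (MvPolynomial.support_sum hd)
  rw [term_supp_y f hdS j]
  split <;> omega

lemma sqf_gO : sqf (gO f) := by
  intro d hd j
  rw [gO_eq] at hd
  obtain ⟨S, _, hdS⟩ := Finset.mem_biUnion.1 (MvPolynomial.support_sum hd)
  rw [term_supp_y f hdS j]
  split <;> omega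

/-- Main step B : an element of `J` all of whose monomials are standard is zero. -/
lemma std_mem_zero (hfm : f (Fin.last m) ≠ 0) {b : MvPolynomial (Fin ((m+1)+1+n)) k}
    (hb : b ∈ Jid f) (hstd : ∀ d ∈ b.support, ¬ Dcond f d) : b = 0 := by
  obtain ⟨c, hc, r, s, hr, hs, rfl⟩ := Jnf_of_mem f hb
  set b := c + r * gE f + s * gO f with hbdef
  -- b is squarefree in y
  have hsqf : sqf b := by
    intro d hd j
    by_contra hgt
    apply hstd d hd
    left
    exact ⟨j, Finsupp.single_le_iff.2 (by omega)⟩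
  -- apply Phi
  have hb2 : b = r * gE f + s * gO f := by
    conv_lhs => rw [← Phi_sqf f hsqf]
    rw [hbdef, Phi_add, Phi_add, Phi_IC f hc, zero_add]
    rw [mul_comm r, mul_comm s, Phi_mul_noY f hr, Phi_mul_noY f hs,
      Phi_sqf f (sqf_gE f), Phi_sqf f (sqf_gO f)]
    ring
  -- psi univ of b is zero
  have hpsi_zero : ∀ w, (∀ d, patt w d → d ∈ b.support → False) → psi w b = 0 := by
    intro w hw
    apply MvPolynomial.ext
    intro d
    rw [coeff_psi, MvPolynomial.coeff_zero]
    split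
    · rename_i h
      by_contra hcne
      exact hw d h (MvPolynomial.mem_support_iff.2 hcne)
    · rfl
  have hr0 : r = 0 := by
    have h1 : psi Finset.univ b = 0 := by
      apply hpsi_zero
      intro d hpatt hdsupp
      apply hstd d hdsupp
      right; left
      rw [Finsupp.le_iff]
      intro v hv
      rcases val_cases v with ⟨j, rfl⟩ | hv'
      · rw [hpatt j, chi_apply_y]
      · rw [chi_apply_hi _ _ hv']
        omega
    rw [hb2, psi_add, mul_comm r, mul_comm s, psi_mul_noY _ hr, psi_mul_noY _ hs,
      psi_gE, psi_gO_univ, zero_mul, add_zero] at h1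
    by_contra hrne
    have := mul_ne_zero (MvPolynomial.monomial_eq_zero.not.2 (by simp) :
      (monomial (chi (n := n) Finset.univ) (1:k)) ≠ 0) hrne
    exact this h1
  -- now b = s * gO
  have hb3 : b = s * gO f := by rw [hb2, hr0]; ring
  have hs0 : s = 0 := by
    by_contra hsne
    set q : MvPolynomial (Fin ((m+1)+1+n)) k :=
      (monomial (chi ({Fin.last m}ᶜ)) (1:k) * Fr f (Fin.last m)) * s with hq
    have hpsi : psi ({Fin.last m}ᶜ) b = q := by
      rw [hb3, mul_comm s, psi_mul_noY _ hs, psi_gO_lastc]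
    -- q is nonzero
    have hmono_ne : (monomial (chi ({Fin.last m}ᶜ)) (1:k) :
        MvPolynomial (Fin ((m+1)+1+n)) k) ≠ 0 := MvPolynomial.monomial_eq_zero.not.2 (by simp)
    have hFr_ne : Fr f (Fin.last m) ≠ 0 := Fr_ne_zero' f _ hfm
    have hq_ne : q ≠ 0 := mul_ne_zero (mul_ne_zero hmono_ne hFr_ne) hsne
    -- leading monomial of q
    have hc1 : MvPolynomial.coeff (leadMon (monomial (chi (n := n) ({Fin.last m}ᶜ)) (1:k)))
        (monomial (chi (n := n) ({Fin.last m}ᶜ)) (1:k)) = 1 := by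
      rw [leadMon_monomial (one_ne_zero (α := k)), MvPolynomial.coeff_monomial, if_pos rfl]
    have hlead1 : leadMon (monomial (chi (n := n) ({Fin.last m}ᶜ)) (1:k) * Fr f (Fin.last m))
        = chi ({Fin.last m}ᶜ) + leadMon (Fr f (Fin.last m)) := by
      have h12 := leadMon_mul (p := monomial (chi (n := n) ({Fin.last m}ᶜ)) (1:k))
        (q := Fr f (Fin.last m))
        (by rw [hc1, one_mul]; exact coeff_leadMon_ne_zero hFr_ne)
      rw [leadMon_monomial (one_ne_zero (α := k))] at h12
      exact h12
    have hlead : leadMon q = (chi ({Fin.last m}ᶜ) + leadMon (Fr f (Fin.last m))) + leadMon s := by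
      rw [hq, ← hlead1]
      apply leadMon_mul
      apply mul_ne_zero
      · exact coeff_leadMon_ne_zero (mul_ne_zero hmono_ne hFr_ne)
      · exact coeff_leadMon_ne_zero hsne
    have hmem : leadMon q ∈ b.support := by
      have h0 : leadMon q ∈ (psi ({Fin.last m}ᶜ) b).support := by
        rw [hpsi]; exact leadMon_mem hq_ne
      exact (psi_supp _ b h0).1
    apply hstd _ hmem
    right; right
    rw [tOdd, hlead]
    exact le_add_of_nonneg_right zero_le
  rw [hb3, hs0, zero_mul]


/-- data of a generator whose leading monomial divides `t₀` -/
lemma gen_of_Dcond (hfm : f (Fin.last m) ≠ 0) {t₀ : Fin ((m+1)+1+n) →₀ ℕ}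
    (hD : Dcond f t₀) :
    ∃ g : MvPolynomial (Fin ((m+1)+1+n)) k, g ∈ Jid f ∧
      leadMon g ≤ t₀ ∧ MvPolynomial.coeff (leadMon g) g ≠ 0 ∧
      (∀ d ∈ g.support, toLex d ≤ toLex (leadMon g)) := by
  rcases hD with ⟨i, hle⟩ | hle | hle
  · exact ⟨bin f i, bin_mem_J f i, by rw [leadMon_bin]; exact hle,
      by rw [leadMon_bin, coeff_bin_lead]; exact one_ne_zero, fun d hd => by
        rw [leadMon_bin]; exact bin_supp_le f i hd⟩
  · exact ⟨gE f, gE_mem_J f, by rw [leadMon_gE]; exact hle,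
      coeff_leadMon_ne_zero (gE_ne_zero f), fun d hd => by
        rw [leadMon_gE]; exact gE_supp_le f hd⟩
  · exact ⟨gO f, gO_mem_J f, by rw [leadMon_gO f hfm]; exact hle,
      coeff_leadMon_ne_zero (gO_ne_zero f hfm), fun d hd => by
        rw [leadMon_gO f hfm]; exact gO_supp_le f hfm hd⟩

/-- the normal form / division lemma -/
lemma NF (hfm : f (Fin.last m) ≠ 0) (p : MvPolynomial (Fin ((m+1)+1+n)) k) :
    ∃ b : MvPolynomial (Fin ((m+1)+1+n)) k, p - b ∈ Jid f ∧
      (∀ d ∈ b.support, ¬ Dcond f d ∧ toLex d ≤ toLex (leadMon p)) ∧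
      (∀ d, ¬ Dcond f d → toLex (leadMon p) ≤ toLex d →
        MvPolynomial.coeff d b = MvPolynomial.coeff d p) := by
  have wf : WellFounded ((· < ·) : Lex (Fin ((m+1)+1+n) →₀ ℕ) →
      Lex (Fin ((m+1)+1+n) →₀ ℕ) → Prop) := IsWellFounded.wf
  generalize ht : toLex (leadMon p) = t
  induction t using WellFounded.induction wf generalizing p with
  | _ t IH =>
  subst ht
  rcases eq_or_ne p 0 with rfl | hp0
  · exact ⟨0, by simpa using Ideal.zero_mem _, by simp, fun d _ _ => rfl⟩
  set t₀ := leadMon p with ht₀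
  by_cases hD : Dcond f t₀
  · -- reduce the leading term by a generator
    obtain ⟨g, hgJ, hgle, hgc, hgsupp⟩ := gen_of_Dcond f hfm hD
    set ℓ := leadMon g with hℓ
    set u := t₀ - ℓ with hu
    have huℓ : u + ℓ = t₀ := by
      ext v
      rw [Finsupp.add_apply, Finsupp.tsub_apply]
      have := Finsupp.le_def.1 hgle v
      omega
    set M := monomial u (MvPolynomial.coeff t₀ p / MvPolynomial.coeff ℓ g) * g with hM
    have hMcoeff : MvPolynomial.coeff t₀ M = MvPolynomial.coeff t₀ p := by
      rw [hM, ← huℓ, MvPolynomial.coeff_monomial_mul, div_mul_cancel₀ _ hgc]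
    have hMsupp : ∀ d ∈ M.support, toLex d ≤ toLex t₀ := by
      intro d hd
      obtain ⟨d1, h1, d2, h2, rfl⟩ := Finset.mem_add.1 (MvPolynomial.support_mul _ g hd)
      have hd1 : d1 = u := by
        have := MvPolynomial.support_monomial_subset h1
        simpa using this
      subst hd1
      rw [← huℓ, toLex_add', toLex_add']
      exact add_le_add_right (hgsupp d2 h2) _
    set p' := p - M with hp'
    have hp'c : MvPolynomial.coeff t₀ p' = 0 := by
      rw [hp', MvPolynomial.coeff_sub, hMcoeff, sub_self]
    have hp'supp : ∀ d ∈ p'.support, toLex d ≤ toLex t₀ ∧ d ≠ t₀ := by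
      intro d hd
      constructor
      · rw [hp', sub_eq_add_neg] at hd
        rcases Finset.mem_union.1 (MvPolynomial.support_add hd) with h | h
        · exact le_leadMon h
        · rw [MvPolynomial.support_neg] at h
          exact hMsupp d h
      · intro hdt
        subst hdt
        exact MvPolynomial.mem_support_iff.1 hd hp'c
    have hpM : p = p' + M := by rw [hp']; ring
    rcases eq_or_ne p' 0 with hp'0 | hp'ne
    · refine ⟨0, ?_, by simp, ?_⟩
      · rw [sub_zero, hpM, hp'0, zero_add]
        exact Ideal.mul_mem_left _ _ hgJ
      · intro d hdD hdle
        rw [MvPolynomial.coeff_zero]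
        by_contra hne
        have hd : d ∈ p.support := MvPolynomial.mem_support_iff.2 (fun hh => hne hh.symm)
        have := le_antisymm (le_leadMon hd) hdle
        have hdt : d = t₀ := toLex.injective (le_antisymm (le_leadMon hd) hdle)
        exact hdD (hdt ▸ hD)
    · have hlt : toLex (leadMon p') < toLex t₀ := by
        rcases lt_or_eq_of_le (hp'supp _ (leadMon_mem hp'ne)).1 with h | h
        · exact h
        · exact absurd (toLex.injective h) (hp'supp _ (leadMon_mem hp'ne)).2
      obtain ⟨b, hbJ, hbsupp, hbc⟩ := IH (toLex (leadMon p')) hlt p' rfl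
      refine ⟨b, ?_, ?_, ?_⟩
      · rw [show p - b = (p' - b) + M from by rw [hpM]; ring]
        exact Ideal.add_mem _ hbJ (Ideal.mul_mem_left _ _ hgJ)
      · intro d hd
        exact ⟨(hbsupp d hd).1, le_of_lt (lt_of_le_of_lt (hbsupp d hd).2 hlt)⟩
      · intro d hdD hdle
        have hb0 : MvPolynomial.coeff d b = 0 := by
          by_contra hne
          have := (hbsupp d (MvPolynomial.mem_support_iff.2 hne)).2
          exact absurd (lt_of_le_of_lt this hlt) (not_lt.2 hdle)
        have hp0' : MvPolynomial.coeff d p = 0 := by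
          by_contra hne
          have hd : d ∈ p.support := MvPolynomial.mem_support_iff.2 hne
          have hdt : d = t₀ := toLex.injective (le_antisymm (le_leadMon hd) hdle)
          exact hdD (hdt ▸ hD)
        rw [hb0, hp0']
  · -- the leading term is standard : keep it
    set p' := p - monomial t₀ (MvPolynomial.coeff t₀ p) with hp'
    have hsupp' : ∀ d ∈ p'.support, d ∈ p.support ∧ d ≠ t₀ := by
      intro d hd
      have hcd : MvPolynomial.coeff d p' ≠ 0 := MvPolynomial.mem_support_iff.1 hd
      rw [hp', MvPolynomial.coeff_sub, MvPolynomial.coeff_monomial] at hcd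
      by_cases hdt : t₀ = d
      · subst hdt
        rw [if_pos rfl] at hcd
        simp at hcd
      · rw [if_neg hdt, sub_zero] at hcd
        exact ⟨MvPolynomial.mem_support_iff.2 hcd, fun hh => hdt hh.symm⟩
    have hcoeq : ∀ d, d ≠ t₀ → MvPolynomial.coeff d p' = MvPolynomial.coeff d p := by
      intro d hd
      rw [hp', MvPolynomial.coeff_sub, MvPolynomial.coeff_monomial,
        if_neg (fun hh => hd hh.symm), sub_zero]
    rcases eq_or_ne p' 0 with hp'0 | hp'ne
    · refine ⟨p, by simpa using Ideal.zero_mem _, ?_, fun d _ _ => rfl⟩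
      intro d hd
      have hdt : d = t₀ := by
        by_contra hne
        have : MvPolynomial.coeff d p' ≠ 0 := by
          rw [hcoeq d hne]
          exact MvPolynomial.mem_support_iff.1 hd
        rw [hp'0] at this
        simp at this
      subst hdt
      exact ⟨hD, le_refl _⟩
    · have hlt : toLex (leadMon p') < toLex t₀ := by
        have h1 := (hsupp' _ (leadMon_mem hp'ne))
        rcases lt_or_eq_of_le (le_leadMon h1.1) with h | h
        · exact h
        · exact absurd (toLex.injective h) h1.2
      obtain ⟨b, hbJ, hbsupp, hbc⟩ := IH (toLex (leadMon p')) hlt p' rfl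
      refine ⟨b + monomial t₀ (MvPolynomial.coeff t₀ p), ?_, ?_, ?_⟩
      · rw [show p - (b + monomial t₀ (MvPolynomial.coeff t₀ p)) = p' - b from by
          rw [hp']; ring]
        exact hbJ
      · intro d hd
        rcases Finset.mem_union.1 (MvPolynomial.support_add hd) with h | h
        · exact ⟨(hbsupp d h).1, le_of_lt (lt_of_le_of_lt (hbsupp d h).2 hlt)⟩
        · have : d = t₀ := by
            have := MvPolynomial.support_monomial_subset h
            simpa using this
          subst this
          exact ⟨hD, le_refl _⟩
      · intro d hdD hdle
        have hb0 : MvPolynomial.coeff d b = 0 := by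
          by_contra hne
          have := (hbsupp d (MvPolynomial.mem_support_iff.2 hne)).2
          exact absurd (lt_of_le_of_lt this hlt) (not_lt.2 hdle)
        rw [MvPolynomial.coeff_add, hb0, zero_add, MvPolynomial.coeff_monomial]
        by_cases hdt : t₀ = d
        · subst hdt
          rw [if_pos rfl]
        · rw [if_neg hdt]
          symm
          by_contra hne
          have hd : d ∈ p.support := MvPolynomial.mem_support_iff.2 hne
          exact hdt (toLex.injective (le_antisymm (le_leadMon hd) hdle)).symm

/-- Main theorem A : the leading monomial of any nonzero element of `J` is divisible by
one of the leading monomials of the generators. -/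
theorem lead_of_mem (hfm : f (Fin.last m) ≠ 0) {p : MvPolynomial (Fin ((m+1)+1+n)) k}
    (hp : p ∈ Jid f) (hp0 : p ≠ 0) : Dcond f (leadMon p) := by
  by_contra hD
  obtain ⟨b, hbJ, hbsupp, hbc⟩ := NF f hfm p
  have hbmem : b ∈ Jid f := by
    have : b = p - (p - b) := by ring
    rw [this]
    exact Ideal.sub_mem _ hp hbJ
  have hb0 : b = 0 := std_mem_zero f hfm hbmem (fun d hd => (hbsupp d hd).1)
  have := hbc (leadMon p) hD (le_refl _)
  rw [hb0] at this
  simp at this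
  exact coeff_leadMon_ne_zero hp0 this.symm


lemma mono_div_mem {ℓ t : Fin ((m+1)+1+n) →₀ ℕ} (h : ℓ ≤ t)
    {I : Ideal (MvPolynomial (Fin ((m+1)+1+n)) k)} (hmem : monomial ℓ (1:k) ∈ I) :
    monomial t (1:k) ∈ I := by
  have he : t - ℓ + ℓ = t := by
    ext v
    rw [Finsupp.add_apply, Finsupp.tsub_apply]
    have := Finsupp.le_def.1 h v
    omega
  have : monomial t (1:k) = monomial (t - ℓ) 1 * monomial ℓ 1 := by
    rw [MvPolynomial.monomial_mul, one_mul, he]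
  rw [this]
  exact Ideal.mul_mem_left _ _ hmem

theorem main1 (hfm : f (Fin.last m) ≠ 0) :
    Ideal.span ((fun p => monomial (leadMon p) (1:k)) ''
        {p : MvPolynomial (Fin ((m+1)+1+n)) k | p ∈ Jid f ∧ p ≠ 0})
      = Ideal.span ((fun p => monomial (leadMon p) (1:k)) ''
        (Set.range (bin f) ∪ {gE f, gO f})) := by
  apply le_antisymm
  · rw [Ideal.span_le]
    rintro x ⟨p, ⟨hpJ, hp0⟩, rfl⟩
    have hD := lead_of_mem f hfm hpJ hp0
    have hbinmem : ∀ i : Fin (m+1), monomial (Finsupp.single (yI (n := n) i) 2) (1:k) ∈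
        Ideal.span ((fun p => monomial (leadMon p) (1:k)) ''
          (Set.range (bin f) ∪ {gE f, gO f})) := by
      intro i
      have : monomial (Finsupp.single (yI (n := n) i) 2) (1:k)
          = monomial (leadMon (bin f i)) 1 := by rw [leadMon_bin]
      rw [this]
      exact Ideal.subset_span ⟨bin f i, Or.inl ⟨i, rfl⟩, rfl⟩
    have hgEmem : monomial (chi (n := n) (Finset.univ : Finset (Fin (m+1)))) (1:k) ∈
        Ideal.span ((fun p => monomial (leadMon p) (1:k)) ''
          (Set.range (bin f) ∪ {gE f, gO f})) := by
      have : monomial (chi (n := n) (Finset.univ : Finset (Fin (m+1)))) (1:k)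
          = monomial (leadMon (gE f)) 1 := by rw [leadMon_gE]
      rw [this]
      exact Ideal.subset_span ⟨gE f, Or.inr (by simp), rfl⟩
    have hgOmem : monomial (tOdd f) (1:k) ∈
        Ideal.span ((fun p => monomial (leadMon p) (1:k)) ''
          (Set.range (bin f) ∪ {gE f, gO f})) := by
      have : monomial (tOdd f) (1:k) = monomial (leadMon (gO f)) 1 := by
        rw [leadMon_gO f hfm]
      rw [this]
      exact Ideal.subset_span ⟨gO f, Or.inr (by simp), rfl⟩
    rcases hD with ⟨i, hle⟩ | hle | hle
    · exact mono_div_mem hle (hbinmem i)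
    · exact mono_div_mem hle hgEmem
    · exact mono_div_mem hle hgOmem
  · rw [Ideal.span_le]
    rintro x ⟨g, hg, rfl⟩
    apply Ideal.subset_span
    refine ⟨g, ⟨Ideal.subset_span hg, ?_⟩, rfl⟩
    rw [Set.mem_union] at hg
    rcases hg with hgr | hgp
    · obtain ⟨i, rfl⟩ := hgr
      exact bin_ne_zero f i
    · simp only [Set.mem_insert_iff, Set.mem_singleton_iff] at hgp
      rcases hgp with rfl | rfl
      · exact gE_ne_zero f
      · exact gO_ne_zero f hfm

theorem main2 (hfm : f (Fin.last m) ≠ 0) :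
    Ideal.span ((fun p => monomial (leadMon p) (1:k)) ''
        {p : MvPolynomial (Fin ((m+1)+1+n)) k | p ∈ Jid f ∧ p ≠ 0})
      = Ideal.span ((Set.range fun i : Fin (m+1) =>
            (X (yI i) : MvPolynomial (Fin ((m+1)+1+n)) k) ^ 2) ∪
          {∏ i : Fin (m+1), (X (yI i) : MvPolynomial (Fin ((m+1)+1+n)) k),
           (∏ i ∈ Finset.univ \ {Fin.last m},
              (X (yI i) : MvPolynomial (Fin ((m+1)+1+n)) k)) *
             monomial (leadMon (Fr f (Fin.last m))) (1:k)}) := by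
  rw [main1 f hfm]
  congr 1
  rw [Set.image_union, Set.image_pair]
  congr 1
  · rw [← Set.range_comp]
    exact congrArg Set.range (funext fun i => by
      show monomial (leadMon (bin f i)) (1:k) = X (yI i) ^ 2
      rw [leadMon_bin, MvPolynomial.X_pow_eq_monomial])
  · congr 1
    · rw [leadMon_gE, ← prod_Y]
    · have hpy : (∏ i ∈ Finset.univ \ {Fin.last m},
          (X (yI i) : MvPolynomial (Fin ((m+1)+1+n)) k))
            = monomial (chi ({Fin.last m}ᶜ)) 1 := by
        rw [← Finset.compl_eq_univ_sdiff, prod_Y]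
      rw [leadMon_gO f hfm, tOdd, hpy, MvPolynomial.monomial_mul, one_mul]

end GBaux

/-- **Lemma (init1).** Work in `T = k[y 1, …, y m, z, x 1, …, x n]` with the lex order
`y 1 > ⋯ > y m > z > x 1 > ⋯ > x n` (variables indexed by `Fin (m+1+1+n)`, `y i = X i`,
`z = X (m+1)`, `x j = X (m+1+1+j)`, and `m+1` polynomials `f 0, …, f m` in the `x`-variables).
Then `y 1² - z f 1², …, y m² - z f m², g even, g odd` form a Gröbner basis of the ideal `J`
they generate: the initial ideal of `J` is generated by the initial monomials of these
generators, and equals `(y 1², …, y m², y 1 ⋯ y m, y 1 ⋯ y (m-1) · in(f m))`. -/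
theorem groebner_basis_of_C_plus_g
    (k : Type*) [Field k] (n m : ℕ)
    (f : Fin (m + 1) → MvPolynomial (Fin n) k) (hf : ∀ i, f i ≠ 0) :
    letI N := (m + 1) + 1 + n
    letI Y : Fin (m + 1) → MvPolynomial (Fin N) k := fun i => X ⟨(i : ℕ), by omega⟩
    letI Z : MvPolynomial (Fin N) k := X ⟨m + 1, by omega⟩
    letI F : Fin (m + 1) → MvPolynomial (Fin N) k := fun i =>
      rename (fun j : Fin n => (⟨(m + 1) + 1 + (j : ℕ), by omega⟩ : Fin N)) (f i)
    letI gens : Set (MvPolynomial (Fin N) k) :=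
      (Set.range fun i : Fin (m + 1) => Y i ^ 2 - Z * F i ^ 2) ∪
        {gEvenFull Y F Z, gOddFull Y F Z}
    letI J := Ideal.span gens
    Ideal.span ((fun p => monomial (leadMon p) (1 : k)) '' {p | p ∈ J ∧ p ≠ 0}) =
        Ideal.span ((fun p => monomial (leadMon p) (1 : k)) '' gens) ∧
    Ideal.span ((fun p => monomial (leadMon p) (1 : k)) '' {p | p ∈ J ∧ p ≠ 0}) =
        Ideal.span ((Set.range fun i : Fin (m + 1) => Y i ^ 2) ∪
          {∏ i, Y i,
           (∏ i ∈ Finset.univ \ {Fin.last m}, Y i) *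
             monomial (leadMon (F (Fin.last m))) (1 : k)}) := by
  exact ⟨GBaux.main1 f (hf (Fin.last m)), GBaux.main2 f (hf (Fin.last m))⟩
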